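/- arXiv:1809.06141 — 6 statements merged into one kernel-verified Lean document; each statement's English description precedes it below -/
import Mathlib

section
/- For every dimension d ≥ 2 and every finite set 𝓛 of lattice lines in ℝ^d, there exist two distinct finite subsets F₁, F₂ of ℤ^d that are tomographically equivalent with respect to 𝓛; in particular, no finite set of lattice lines determines all finite lattice sets by their X-rays. -/
open Set

variable {d : ℕ}

/-- The affine line through the coset `T` of the modulo-`S` quotient, i.e. an affine
line parallel to `S` when `S` is 1-dimensional. -/
def fiber (S : Submodule ℝ (Fin d → ℝ)) (T : (Fin d → ℝ) ⧸ S) : Set (Fin d → ℝ) :=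
  {x | (Submodule.Quotient.mk x : (Fin d → ℝ) ⧸ S) = T}

/-- `F₁` and `F₂` have the same (discrete) X-ray parallel to `S`. -/
def XrayEq (S : Submodule ℝ (Fin d → ℝ)) (F₁ F₂ : Set (Fin d → ℝ)) : Prop :=
  ∀ T : (Fin d → ℝ) ⧸ S, (F₁ ∩ fiber S T).ncard = (F₂ ∩ fiber S T).ncard

/-- `F₁` and `F₂` are tomographically equivalent w.r.t. the family `𝒮` of lines. -/
def TomEq (𝒮 : Set (Submodule ℝ (Fin d → ℝ))) (F₁ F₂ : Set (Fin d → ℝ)) : Prop :=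
  ∀ S ∈ 𝒮, XrayEq S F₁ F₂

/-- A lattice line: a line through the origin spanned by a nonzero integer vector. -/
def IsLatticeLine (S : Submodule ℝ (Fin d → ℝ)) : Prop :=
  ∃ v : Fin d → ℤ, v ≠ 0 ∧ S = Submodule.span ℝ {fun i => (v i : ℝ)}

/-- The canonical embedding of `ℤ^d` into `ℝ^d`. -/
def embed (x : Fin d → ℤ) : Fin d → ℝ := fun i => (x i : ℝ)

/-- The X-ray difference `Δ_𝒮(F₁,F₂)`. -/
noncomputable def xrayDiff (𝒮 : Set (Submodule ℝ (Fin d → ℝ))) (F₁ F₂ : Set (Fin d → ℝ)) : ℕ :=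
  ∑ᶠ S ∈ 𝒮, ∑ᶠ T : (Fin d → ℝ) ⧸ S,
    (((F₁ ∩ fiber S T).ncard : ℤ) - ((F₂ ∩ fiber S T).ncard : ℤ)).natAbs

/-- A convex lattice set: `F = conv(F) ∩ ℤ^d`. -/
def IsConvexLatticeSet (F : Finset (Fin d → ℤ)) : Prop :=
  embed '' ↑F = convexHull ℝ (embed '' ↑F) ∩ Set.range (embed : (Fin d → ℤ) → (Fin d → ℝ))


lemma embed_injective : Function.Injective (embed (d := d)) := by
  intro x y h
  funext i
  have := congrFun h i
  simpa [embed] using this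

lemma embed_add (x y : Fin d → ℤ) : embed (x + y) = embed x + embed y := by
  funext i; simp [embed]

lemma exists_k (G : Finset (Fin d → ℤ)) (v : Fin d → ℤ) (hv : v ≠ 0) :
    ∃ k : ℤ, ∀ x ∈ G, ∀ y ∈ G, x ≠ y + k • v := by
  obtain ⟨i, hi⟩ : ∃ i, v i ≠ 0 := by
    by_contra h; push_neg at h; exact hv (funext h)
  obtain ⟨M, hM⟩ : ∃ M : ℕ, M = G.sup fun x => (x i).natAbs := ⟨_, rfl⟩
  refine ⟨(2 * M + 1 : ℕ), ?_⟩
  intro x hx y hy hxy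
  have h1 : (x i).natAbs ≤ M := hM ▸ Finset.le_sup (f := fun x => (x i).natAbs) hx
  have h2 : (y i).natAbs ≤ M := hM ▸ Finset.le_sup (f := fun x => (x i).natAbs) hy
  have hxi : x i = y i + (2 * M + 1 : ℕ) * v i := by
    have := congrFun hxy i
    simpa using this
  clear hxy hv hM hx hy G
  have h5 : x i - y i = (2 * M + 1 : ℕ) * v i := by omega
  have h4 : (x i - y i).natAbs ≤ (x i).natAbs + (y i).natAbs := by
    have := abs_sub (x i) (y i)
    omega
  have h3 : ((2 * M + 1 : ℕ) * v i : ℤ).natAbs = (2 * M + 1) * (v i).natAbs := by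
    rw [Int.natAbs_mul, Int.natAbs_natCast]
  rw [h5, h3] at h4
  have hva : 1 ≤ (v i).natAbs := Int.natAbs_pos.mpr hi
  nlinarith

lemma fiber_trans (S : Submodule ℝ (Fin d → ℝ)) (w : Fin d → ℝ) (A : Set (Fin d → ℝ))
    (T : (Fin d → ℝ) ⧸ S) :
    ((fun x => x + w) '' A) ∩ fiber S T
      = (fun x => x + w) '' (A ∩ fiber S (T - Submodule.Quotient.mk w)) := by
  ext z
  simp only [Set.mem_inter_iff, Set.mem_image, fiber, Set.mem_setOf_eq]
  constructor
  · rintro ⟨⟨y, hy, rfl⟩, hT⟩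
    refine ⟨y, ⟨hy, ?_⟩, rfl⟩
    rw [← hT, Submodule.Quotient.mk_add]
    abel
  · rintro ⟨y, ⟨hy, hT⟩, rfl⟩
    refine ⟨⟨y, hy, rfl⟩, ?_⟩
    rw [Submodule.Quotient.mk_add, hT]
    abel

lemma ncard_trans (S : Submodule ℝ (Fin d → ℝ)) (w : Fin d → ℝ) (A : Set (Fin d → ℝ))
    (T : (Fin d → ℝ) ⧸ S) :
    (((fun x => x + w) '' A) ∩ fiber S T).ncard
      = (A ∩ fiber S (T - Submodule.Quotient.mk w)).ncard := by
  rw [fiber_trans]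
  exact Set.ncard_image_of_injective _ (add_left_injective w)

theorem nonuniqueness_for_finitely_many_lattice_lines
    (d : ℕ) (hd : 2 ≤ d) (𝓛 : Finset (Submodule ℝ (Fin d → ℝ)))
    (h𝓛 : ∀ S ∈ 𝓛, IsLatticeLine S) :
    ∃ F₁ F₂ : Finset (Fin d → ℤ), F₁ ≠ F₂ ∧
      TomEq (↑𝓛 : Set (Submodule ℝ (Fin d → ℝ))) (embed '' ↑F₁) (embed '' ↑F₂) := by
  clear hd
  classical
  induction 𝓛 using Finset.induction_on with
  | empty =>
    refine ⟨∅, {0}, Ne.symm (Finset.singleton_ne_empty 0), ?_⟩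
    intro S hS
    simp at hS
  | @insert S 𝓛 hS ih =>
    obtain ⟨F₁, F₂, hne, htom⟩ := ih (fun S' h => h𝓛 S' (Finset.mem_insert_of_mem h))
    obtain ⟨v, hv0, hvS⟩ := h𝓛 S (Finset.mem_insert_self S 𝓛)
    obtain ⟨k, hk⟩ := exists_k (F₁ ∪ F₂) v hv0
    set w : Fin d → ℝ := embed (k • v) with hw
    -- w lies in S
    have hwS : w ∈ S := by
      rw [hvS]
      have : w = (k : ℝ) • (fun i => (v i : ℝ)) := by
        funext i; simp [hw, embed]
      rw [this]
      exact Submodule.smul_mem _ _ (Submodule.subset_span rfl)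
    -- translation description of images
    have himg : ∀ F : Finset (Fin d → ℤ),
        embed '' ↑(F.image (fun x => x + k • v)) = (fun x => x + w) '' (embed '' ↑F) := by
      intro F
      rw [Finset.coe_image, Set.image_image, Set.image_image]
      congr 1
      funext x
      simp [embed_add, hw]
    -- disjointness
    have hdis : ∀ Fa Fb : Finset (Fin d → ℤ), Fa ⊆ F₁ ∪ F₂ → Fb ⊆ F₁ ∪ F₂ →
        Disjoint (embed '' ↑Fa) ((fun x => x + w) '' (embed '' ↑Fb)) := by
      intro Fa Fb ha hb
      rw [Set.disjoint_left]
      rintro z ⟨x, hx, rfl⟩ ⟨-, ⟨y, hy, rfl⟩, hz⟩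
      simp only [hw] at hz
      rw [← embed_add] at hz
      exact hk x (ha hx) y (hb hy) (embed_injective hz).symm
    -- the counting identity
    have hcount : ∀ (Fa Fb : Finset (Fin d → ℤ)), Fa ⊆ F₁ ∪ F₂ → Fb ⊆ F₁ ∪ F₂ →
        ∀ (S' : Submodule ℝ (Fin d → ℝ)) (T : (Fin d → ℝ) ⧸ S'),
        (embed '' ↑(Fa ∪ Fb.image (fun x => x + k • v)) ∩ fiber S' T).ncard
          = (embed '' ↑Fa ∩ fiber S' T).ncard
            + (embed '' ↑Fb ∩ fiber S' (T - Submodule.Quotient.mk w)).ncard := by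
      intro Fa Fb ha hb S' T
      rw [Finset.coe_union, Set.image_union, himg, Set.union_inter_distrib_right]
      rw [Set.ncard_union_eq ((hdis Fa Fb ha hb).mono Set.inter_subset_left Set.inter_subset_left)
        ((Set.Finite.image _ (Finset.finite_toSet Fa)).inter_of_left _)
        ((Set.Finite.image _ (Set.Finite.image _ (Finset.finite_toSet Fb))).inter_of_left _)]
      rw [ncard_trans]
    refine ⟨F₁ ∪ F₂.image (fun x => x + k • v), F₂ ∪ F₁.image (fun x => x + k • v), ?_, ?_⟩
    · -- distinctness
      intro h
      apply hne
      have key : ∀ (Fa Fb : Finset (Fin d → ℤ)), Fa ⊆ F₁ ∪ F₂ → Fb ⊆ F₁ ∪ F₂ →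
          Fa ∪ Fb.image (fun x => x + k • v) = Fb ∪ Fa.image (fun x => x + k • v) →
          Fa ⊆ Fb := by
        intro Fa Fb ha hb heq x hx
        have : x ∈ Fb ∪ Fa.image (fun x => x + k • v) := heq ▸ Finset.mem_union_left _ hx
        rcases Finset.mem_union.mp this with h' | h'
        · exact h'
        · obtain ⟨y, hy, hxy⟩ := Finset.mem_image.mp h'
          exact absurd hxy.symm (hk x (ha hx) y (ha hy))
      exact le_antisymm
        (key F₁ F₂ Finset.subset_union_left Finset.subset_union_right h)
        (key F₂ F₁ Finset.subset_union_right Finset.subset_union_left h.symm)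
    · -- tomographic equivalence
      intro S' hS' T
      rw [hcount F₁ F₂ Finset.subset_union_left Finset.subset_union_right,
        hcount F₂ F₁ Finset.subset_union_right Finset.subset_union_left]
      simp only [Finset.coe_insert, Set.mem_insert_iff, Finset.mem_coe] at hS'
      rcases hS' with rfl | hS'
      · have h0 : (Submodule.Quotient.mk w : (Fin d → ℝ) ⧸ S') = 0 :=
          (Submodule.Quotient.mk_eq_zero S').mpr hwS
        rw [h0, sub_zero, add_comm]
      · rw [htom S' hS' T, htom S' hS' (T - Submodule.Quotient.mk w)]
end

section
/- (Rényi–Heppes) Let 𝒮 be a finite set of 1-dimensional linear subspaces of ℝ^d with |𝒮| = m. Then every finite set F ⊆ ℝ^d with |F| ≤ m − 1 is uniquely determined among finite subsets of ℝ^d by its X-rays parallel to the lines in 𝒮: if F' ⊆ ℝ^d is finite and tomographically equivalent to F with respect to 𝒮, then F' = F. -/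
open Set

variable {d : ℕ}

theorem renyi_heppes
    (d m : ℕ) (𝒮 : Set (Submodule ℝ (Fin d → ℝ))) (hfin : 𝒮.Finite)
    (hdim : ∀ S ∈ 𝒮, Module.finrank ℝ S = 1) (hcard : 𝒮.ncard = m)
    (F : Set (Fin d → ℝ)) (hF : F.Finite) (hFcard : F.ncard + 1 ≤ m)
    (F' : Set (Fin d → ℝ)) (hF' : F'.Finite) (h : TomEq 𝒮 F' F) :
    F' = F := by
  classical
  set A := F \ F' with hA
  set B := F' \ F with hB
  have hAfin : A.Finite := hF.diff (t := F')
  have hBfin : B.Finite := hF'.diff (t := F)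
  have key : ∀ S ∈ 𝒮, ∀ T, (B ∩ fiber S T).ncard = (A ∩ fiber S T).ncard := by
    intro S hS T
    have hsplit : ∀ (G H : Set (Fin d → ℝ)), G.Finite →
        (G ∩ fiber S T).ncard = ((G ∩ H) ∩ fiber S T).ncard + ((G \ H) ∩ fiber S T).ncard := by
      intro G H hG
      rw [← Set.ncard_union_eq
        (Set.disjoint_left.2 (by rintro x ⟨⟨_, hx2⟩, _⟩ ⟨⟨_, hx4⟩, _⟩; exact hx4 hx2))
        ((hG.inter_of_left _).inter_of_left _) ((hG.diff (t := H)).inter_of_left _)]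
      congr 1
      rw [← Set.union_inter_distrib_right, Set.inter_union_diff]
    have h1 := h S hS T
    rw [hsplit F' F hF', hsplit F F' hF, Set.inter_comm F F'] at h1
    exact Nat.add_left_cancel h1
  have hm1 : 1 ≤ m := le_trans (Nat.le_add_left 1 _) hFcard
  have hSne : 𝒮.Nonempty := by
    rw [← Set.ncard_pos hfin]
    omega
  have hBempty : B = ∅ := by
    by_contra hne
    obtain ⟨b, hb⟩ := Set.nonempty_iff_ne_empty.2 hne
    have hAne : ∀ S ∈ 𝒮, (A ∩ fiber S (Submodule.Quotient.mk b)).Nonempty := by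
      intro S hS
      have hb' : b ∈ B ∩ fiber S (Submodule.Quotient.mk b) := ⟨hb, rfl⟩
      have hpos : (B ∩ fiber S (Submodule.Quotient.mk b)).ncard ≠ 0 := by
        have := (Set.ncard_pos (hBfin.inter_of_left _)).2 ⟨b, hb'⟩
        omega
      rw [key S hS] at hpos
      exact Set.nonempty_of_ncard_ne_zero hpos
    set f : Submodule ℝ (Fin d → ℝ) → (Fin d → ℝ) :=
      fun S => if hq : (A ∩ fiber S (Submodule.Quotient.mk b)).Nonempty then hq.choose else b
      with hf
    have hmaps : ∀ S ∈ 𝒮, f S ∈ A ∩ fiber S (Submodule.Quotient.mk b) := by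
      intro S hS
      rw [hf]
      simp only [dif_pos (hAne S hS)]
      exact (hAne S hS).choose_spec
    have hinj : Set.InjOn f 𝒮 := by
      intro S₁ h₁ S₂ h₂ heq
      by_contra hne'
      have ha₁ := hmaps S₁ h₁
      have ha₂ := hmaps S₂ h₂
      have hx₁ : f S₁ - b ∈ S₁ := (Submodule.Quotient.eq S₁).1 ha₁.2
      have hx₂ : f S₁ - b ∈ S₂ := by
        rw [heq]; exact (Submodule.Quotient.eq S₂).1 ha₂.2
      have hxne : f S₁ - b ≠ 0 := by
        intro h0
        rw [sub_eq_zero] at h0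
        exact hb.2 (h0 ▸ ha₁.1.1)
      have hs₁ : S₁ = Submodule.span ℝ {f S₁ - b} := by
        symm
        apply Submodule.eq_of_le_of_finrank_eq
        · rwa [Submodule.span_singleton_le_iff_mem]
        · rw [finrank_span_singleton hxne, hdim S₁ h₁]
      have hs₂ : S₂ = Submodule.span ℝ {f S₁ - b} := by
        symm
        apply Submodule.eq_of_le_of_finrank_eq
        · rwa [Submodule.span_singleton_le_iff_mem]
        · rw [finrank_span_singleton hxne, hdim S₂ h₂]
      exact hne' (hs₁.trans hs₂.symm)
    have hle := Set.ncard_le_ncard_of_injOn f (fun S hS => (hmaps S hS).1) hinj hAfin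
    have hAle : A.ncard ≤ F.ncard := Set.ncard_le_ncard Set.diff_subset hF
    omega
  have hAempty : A = ∅ := by
    obtain ⟨S, hS⟩ := hSne
    by_contra hne
    obtain ⟨a, ha⟩ := Set.nonempty_iff_ne_empty.2 hne
    have hk := key S hS (Submodule.Quotient.mk a)
    rw [hBempty, Set.empty_inter, Set.ncard_empty] at hk
    have hmem : a ∈ A ∩ fiber S (Submodule.Quotient.mk a) := ⟨ha, rfl⟩
    have := (Set.ncard_pos (hAfin.inter_of_left _)).2 ⟨a, hmem⟩
    omega
  exact Set.Subset.antisymm (Set.diff_eq_empty.1 hBempty) (Set.diff_eq_empty.1 hAempty)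
end

section
/- (Sharpness of Rényi's theorem) Let m ≥ 2 and for j = 0, …, 2m − 1 let v_j = (cos(jπ/m), sin(jπ/m)) ∈ ℝ² be the vertices of a regular 2m-gon. Set F₁ = {v_j : j even} and F₂ = {v_j : j odd}. Then F₁ and F₂ are disjoint sets of cardinality m each, and they are tomographically equivalent with respect to the m pairwise distinct 1-dimensional subspaces span{v_{j+1} − v_j}, j = 0, …, m − 1 (the edge directions of the 2m-gon). -/
open Set

variable {d : ℕ}

noncomputable def Vpt (m : ℕ) (a : ℤ) : Fin 2 → ℝ :=
  ![Real.cos ((a : ℝ) * Real.pi / m), Real.sin ((a : ℝ) * Real.pi / m)]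

lemma Vpt_eq_iff (m : ℕ) (hm : 0 < m) (a b : ℤ) :
    Vpt m a = Vpt m b ↔ ((2 * m : ℤ)) ∣ (a - b) := by
  have hm' : (m : ℝ) ≠ 0 := Nat.cast_ne_zero.mpr hm.ne'
  constructor
  · intro h
    have hc : Real.cos ((a : ℝ) * Real.pi / m) = Real.cos ((b : ℝ) * Real.pi / m) := by
      have := congrFun h 0; simpa [Vpt] using this
    have hs : Real.sin ((a : ℝ) * Real.pi / m) = Real.sin ((b : ℝ) * Real.pi / m) := by
      have := congrFun h 1; simpa [Vpt] using this
    have h1 : Real.cos ((a : ℝ) * Real.pi / m - (b : ℝ) * Real.pi / m) = 1 := by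
      rw [Real.cos_sub, hc, hs]
      nlinarith [Real.sin_sq_add_cos_sq ((b : ℝ) * Real.pi / m)]
    obtain ⟨n, hn⟩ := (Real.cos_eq_one_iff _).mp h1
    refine ⟨n, ?_⟩
    have hπ : Real.pi ≠ 0 := Real.pi_ne_zero
    have : ((a - b : ℤ) : ℝ) = ((2 * m * n : ℤ) : ℝ) := by
      push_cast
      field_simp at hn
      push_cast at hn
      have h2 : ((a:ℝ) - b) * Real.pi = (2 * m * n) * Real.pi := by rw [← hn]; ring
      have := mul_right_cancel₀ hπ h2
      linarith
    exact_mod_cast this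
  · rintro ⟨n, hn⟩
    have hab : (a : ℝ) * Real.pi / m = (b : ℝ) * Real.pi / m + n * (2 * Real.pi) := by
      have : ((a : ℝ)) = b + 2 * m * n := by exact_mod_cast congrArg (Int.cast : ℤ → ℝ) (by linarith [hn] : a = b + 2 * m * n)
      rw [this]; field_simp
    funext i
    fin_cases i <;>
      simp [Vpt, hab, Real.cos_add_int_mul_two_pi, Real.sin_add_int_mul_two_pi]

noncomputable def rfl2 (u : Fin 2 → ℝ) (x : Fin 2 → ℝ) : Fin 2 → ℝ :=
  ![2 * (x 0 * u 0 + x 1 * u 1) * u 0 - x 0, 2 * (x 0 * u 0 + x 1 * u 1) * u 1 - x 1]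

lemma rfl2_invol (u : Fin 2 → ℝ) (hu : u 0 ^ 2 + u 1 ^ 2 = 1) :
    Function.Involutive (rfl2 u) := by
  intro x
  funext i
  fin_cases i
  · simp only [rfl2]; simp
    linear_combination (4 * (x 0 * u 0 + x 1 * u 1) * u 0) * hu
  · simp only [rfl2]; simp
    linear_combination (4 * (x 0 * u 0 + x 1 * u 1) * u 1) * hu

lemma rfl2_sub (u : Fin 2 → ℝ) (hu : u 0 ^ 2 + u 1 ^ 2 = 1) (x : Fin 2 → ℝ) :
    rfl2 u x - x = (2 * (x 0 * u 1 - x 1 * u 0)) • ![-u 1, u 0] := by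
  funext i
  fin_cases i
  · simp only [rfl2, Pi.sub_apply, Pi.smul_apply]; simp
    linear_combination (2 * x 0) * hu
  · simp only [rfl2, Pi.sub_apply, Pi.smul_apply]; simp
    linear_combination (2 * x 1) * hu

lemma rfl2_V (m : ℕ) (hm : 0 < m) (j k : ℤ) :
    rfl2 ![Real.cos ((2 * (j:ℝ) + 1) * Real.pi / (2 * m)), Real.sin ((2 * (j:ℝ) + 1) * Real.pi / (2 * m))]
      (Vpt m k) = Vpt m (2 * j + 1 - k) := by
  have hm' : (m : ℝ) ≠ 0 := Nat.cast_ne_zero.mpr hm.ne'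
  set θ := (2 * (j:ℝ) + 1) * Real.pi / (2 * m) with hθ
  have h2 : ((2 * j + 1 - k : ℤ) : ℝ) * Real.pi / m = 2 * θ - (k : ℝ) * Real.pi / m := by
    rw [hθ]; push_cast; field_simp
  funext i
  fin_cases i
  · simp only [rfl2, Vpt, h2]
    simp [Real.cos_sub, Real.sin_sub, Real.cos_two_mul, Real.sin_two_mul]
    ring
  · simp only [rfl2, Vpt, h2]
    simp [Real.cos_sub, Real.sin_sub, Real.cos_two_mul, Real.sin_two_mul]
    linear_combination (2 * Real.sin ((k:ℝ) * Real.pi / m)) * Real.sin_sq_add_cos_sq θ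

lemma edge_eq (m : ℕ) (hm : 0 < m) (j : ℤ) :
    Vpt m (j + 1) - Vpt m j =
      (2 * Real.sin (Real.pi / (2 * m))) •
        ![-Real.sin ((2 * (j:ℝ) + 1) * Real.pi / (2 * m)), Real.cos ((2 * (j:ℝ) + 1) * Real.pi / (2 * m))] := by
  have hm' : (m : ℝ) ≠ 0 := Nat.cast_ne_zero.mpr hm.ne'
  have hA : (((j : ℝ) + 1) * Real.pi / m + (j : ℝ) * Real.pi / m) / 2
      = (2 * (j:ℝ) + 1) * Real.pi / (2 * m) := by push_cast; field_simp; ring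
  have hB : (((j : ℝ) + 1) * Real.pi / m - (j : ℝ) * Real.pi / m) / 2
      = Real.pi / (2 * m) := by push_cast; field_simp; ring
  funext i
  fin_cases i
  · simp [Vpt]
    rw [Real.cos_sub_cos]
    rw [hA, hB]; ring
  · simp [Vpt]
    rw [Real.sin_sub_sin, hB, hA]

theorem renyi_sharpness_regular_2m_gon
    (m : ℕ) (hm : 2 ≤ m)
    (v : ℕ → (Fin 2 → ℝ))
    (hv : ∀ j : ℕ, v j = ![Real.cos ((j : ℝ) * Real.pi / (m : ℝ)),
                           Real.sin ((j : ℝ) * Real.pi / (m : ℝ))])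
    (F₁ F₂ : Set (Fin 2 → ℝ))
    (hF₁ : F₁ = {x | ∃ j : ℕ, j < 2 * m ∧ Even j ∧ x = v j})
    (hF₂ : F₂ = {x | ∃ j : ℕ, j < 2 * m ∧ Odd j ∧ x = v j}) :
    Disjoint F₁ F₂ ∧ F₁.ncard = m ∧ F₂.ncard = m ∧
    (∀ i j : ℕ, i < m → j < m → i ≠ j →
      Submodule.span ℝ {v (i + 1) - v i} ≠ Submodule.span ℝ {v (j + 1) - v j}) ∧
    TomEq {L | ∃ j : ℕ, j < m ∧ L = Submodule.span ℝ {v (j + 1) - v j}} F₁ F₂ := by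
  have hm0 : 0 < m := by omega
  have hmr : (m : ℝ) ≠ 0 := Nat.cast_ne_zero.mpr hm0.ne'
  have hvV : ∀ n : ℕ, v n = Vpt m (n : ℤ) := by
    intro n; rw [hv]; simp [Vpt]
  have key := Vpt_eq_iff m hm0
  -- Disjointness
  have hdisj : Disjoint F₁ F₂ := by
    rw [Set.disjoint_left]
    rintro x hx1 hx2
    rw [hF₁] at hx1; rw [hF₂] at hx2
    obtain ⟨j₁, hj₁, ⟨a, rfl⟩, rfl⟩ := hx1
    obtain ⟨j₂, hj₂, ⟨b, rfl⟩, hvv⟩ := hx2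
    rw [hvV, hvV] at hvv
    have hd := (key _ _).mp hvv
    have h0 : ((a + a : ℕ) : ℤ) - ((2 * b + 1 : ℕ) : ℤ) = 0 :=
      Int.eq_zero_of_abs_lt_dvd hd (by rw [abs_lt]; constructor <;> [omega; omega])
    omega
  -- Cardinalities
  have hIio : ∀ k : ℕ, (Set.Iio k).ncard = k := by
    intro k
    rw [show (Set.Iio k) = ↑(Finset.range k) by ext; simp, Set.ncard_coe_finset, Finset.card_range]
  have hn1 : F₁.ncard = m := by
    have hc1 : F₁ = (fun i : ℕ => v (2 * i)) '' Set.Iio m := by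
      rw [hF₁]; ext x
      simp only [Set.mem_setOf_eq, Set.mem_image, Set.mem_Iio]
      constructor
      · rintro ⟨jj, hjj, ⟨a, rfl⟩, rfl⟩
        exact ⟨a, by omega, by rw [two_mul]⟩
      · rintro ⟨i, hi, rfl⟩
        exact ⟨2 * i, by omega, even_two_mul i, rfl⟩
    have hinj1 : Set.InjOn (fun i : ℕ => v (2 * i)) (Set.Iio m) := by
      intro a ha b hb hab
      simp only at hab
      rw [hvV, hvV] at hab
      have hd := (key _ _).mp hab
      have h0 : ((2 * a : ℕ) : ℤ) - ((2 * b : ℕ) : ℤ) = 0 :=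
        Int.eq_zero_of_abs_lt_dvd hd (by rw [abs_lt]; simp only [Set.mem_Iio] at ha hb; constructor <;> [omega; omega])
      omega
    rw [hc1, Set.ncard_image_of_injOn hinj1, hIio]
  have hn2 : F₂.ncard = m := by
    have hc2 : F₂ = (fun i : ℕ => v (2 * i + 1)) '' Set.Iio m := by
      rw [hF₂]; ext x
      simp only [Set.mem_setOf_eq, Set.mem_image, Set.mem_Iio]
      constructor
      · rintro ⟨jj, hjj, ⟨a, rfl⟩, rfl⟩
        exact ⟨a, by omega, rfl⟩
      · rintro ⟨i, hi, rfl⟩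
        exact ⟨2 * i + 1, by omega, ⟨i, rfl⟩, rfl⟩
    have hinj2 : Set.InjOn (fun i : ℕ => v (2 * i + 1)) (Set.Iio m) := by
      intro a ha b hb hab
      simp only at hab
      rw [hvV, hvV] at hab
      have hd := (key _ _).mp hab
      have h0 : ((2 * a + 1 : ℕ) : ℤ) - ((2 * b + 1 : ℕ) : ℤ) = 0 :=
        Int.eq_zero_of_abs_lt_dvd hd (by rw [abs_lt]; simp only [Set.mem_Iio] at ha hb; constructor <;> [omega; omega])
      omega
    rw [hc2, Set.ncard_image_of_injOn hinj2, hIio]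
  -- the edge direction data
  have hs0 : Real.sin (Real.pi / (2 * m)) ≠ 0 := by
    have h1 : 0 < Real.pi / (2 * m) := by positivity
    have h2 : Real.pi / (2 * m) < Real.pi := by
      apply div_lt_self Real.pi_pos
      have : (1 : ℝ) < (2 : ℝ) * m := by
        have : (1 : ℝ) ≤ (m : ℝ) := by exact_mod_cast hm0
        linarith
      exact this
    exact (Real.sin_pos_of_pos_of_lt_pi h1 h2).ne'
  have hs0' : (2 * Real.sin (Real.pi / (2 * m))) ≠ 0 := by
    simpa using hs0
  have hedge : ∀ i : ℕ, v (i + 1) - v i =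
      (2 * Real.sin (Real.pi / (2 * m))) •
        ![-Real.sin ((2 * ((i : ℤ) : ℝ) + 1) * Real.pi / (2 * m)),
          Real.cos ((2 * ((i : ℤ) : ℝ) + 1) * Real.pi / (2 * m))] := by
    intro i
    rw [hvV, hvV]
    have e1 : ((i + 1 : ℕ) : ℤ) = (i : ℤ) + 1 := by push_cast; ring
    rw [e1]
    exact edge_eq m hm0 (i : ℤ)
  have hspan : ∀ i : ℕ, Submodule.span ℝ {v (i + 1) - v i} =
      Submodule.span ℝ {![-Real.sin ((2 * ((i : ℤ) : ℝ) + 1) * Real.pi / (2 * m)),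
          Real.cos ((2 * ((i : ℤ) : ℝ) + 1) * Real.pi / (2 * m))]} := by
    intro i
    rw [hedge i]
    exact Submodule.span_singleton_smul_eq (isUnit_iff_ne_zero.mpr hs0') _
  -- distinctness of the m directions
  have hdist : ∀ i j : ℕ, i < m → j < m → i ≠ j →
      Submodule.span ℝ {v (i + 1) - v i} ≠ Submodule.span ℝ {v (j + 1) - v j} := by
    intro i j hi hj hij heq
    rw [hspan i, hspan j] at heq
    set θi := (2 * ((i : ℤ) : ℝ) + 1) * Real.pi / (2 * m) with hθi
    set θj := (2 * ((j : ℤ) : ℝ) + 1) * Real.pi / (2 * m) with hθj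
    have hmem : (![-Real.sin θi, Real.cos θi]) ∈
        Submodule.span ℝ {![-Real.sin θj, Real.cos θj]} := by
      rw [← heq]; exact Submodule.mem_span_singleton_self _
    obtain ⟨a, ha⟩ := Submodule.mem_span_singleton.mp hmem
    have h0 := congrFun ha 0
    have h1 := congrFun ha 1
    simp only [Pi.smul_apply, Matrix.cons_val_zero, Matrix.cons_val_one, Matrix.head_cons,
      smul_eq_mul] at h0 h1
    have hsin0 : Real.sin (θi - θj) = 0 := by
      rw [Real.sin_sub]
      linear_combination Real.cos θj * h0 + Real.sin θj * h1
    obtain ⟨n, hn⟩ := Real.sin_eq_zero_iff.mp hsin0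
    have hθ : θi - θj = (((i : ℤ) : ℝ) - ((j : ℤ) : ℝ)) * Real.pi / m := by
      rw [hθi, hθj]; field_simp; ring
    have hnm : ((n * m : ℤ) : ℝ) = (((i : ℤ) - (j : ℤ) : ℤ) : ℝ) := by
      push_cast
      have hπ : Real.pi ≠ 0 := Real.pi_ne_zero
      rw [hθ] at hn
      field_simp at hn
      have h2 : ((n : ℝ) * m) * Real.pi = ((i : ℝ) - (j : ℝ)) * Real.pi := by rw [hn]; norm_cast
      exact mul_right_cancel₀ hπ h2
    have hnm' : (n * m : ℤ) = (i : ℤ) - (j : ℤ) := by exact_mod_cast hnm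
    have hd : (m : ℤ) ∣ (i : ℤ) - (j : ℤ) := ⟨n, by linarith [hnm']⟩
    have h0' : (i : ℤ) - (j : ℤ) = 0 :=
      Int.eq_zero_of_abs_lt_dvd hd (by rw [abs_lt]; constructor <;> [omega; omega])
    omega
  refine ⟨hdisj, hn1, hn2, hdist, ?_⟩
  -- tomographic equivalence
  intro S hS
  simp only [Set.mem_setOf_eq] at hS
  obtain ⟨j, hjm, rfl⟩ := hS
  intro T
  set θ := (2 * ((j : ℤ) : ℝ) + 1) * Real.pi / (2 * m) with hθ
  set u : Fin 2 → ℝ := ![Real.cos θ, Real.sin θ] with hu'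
  have hu : u 0 ^ 2 + u 1 ^ 2 = 1 := by
    simp only [hu', Matrix.cons_val_zero, Matrix.cons_val_one, Matrix.head_cons]
    exact Real.cos_sq_add_sin_sq θ
  have hinv := rfl2_invol u hu
  have hinj := hinv.injective
  have hmem : ∀ x, rfl2 u x - x ∈ Submodule.span ℝ {v (j + 1) - v j} := by
    intro x
    have h := rfl2_sub u hu x
    have e1 : u 1 = Real.sin θ := rfl
    have e0 : u 0 = Real.cos θ := rfl
    have e : (![-u 1, u 0] : Fin 2 → ℝ) = ![-Real.sin θ, Real.cos θ] := by rw [e1, e0]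
    rw [e] at h
    rw [hspan j, ← hθ, h]
    exact Submodule.smul_mem _ _ (Submodule.mem_span_singleton_self _)
  have hmk : ∀ x, (Submodule.Quotient.mk (rfl2 u x) :
      (Fin 2 → ℝ) ⧸ Submodule.span ℝ {v (j + 1) - v j}) = Submodule.Quotient.mk x :=
    fun x => (Submodule.Quotient.eq _).mpr (hmem x)
  have hfib : rfl2 u '' fiber (Submodule.span ℝ {v (j + 1) - v j}) T
      = fiber (Submodule.span ℝ {v (j + 1) - v j}) T := by
    ext x
    constructor
    · rintro ⟨y, hy, rfl⟩
      simp only [fiber, Set.mem_setOf_eq] at hy ⊢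
      rw [hmk]; exact hy
    · intro hx
      exact ⟨rfl2 u x, by simp only [fiber, Set.mem_setOf_eq] at hx ⊢; rw [hmk]; exact hx, hinv x⟩
  -- reflection maps F₁ onto F₂
  have hRV : ∀ k : ℕ, rfl2 u (v k) = Vpt m (2 * (j : ℤ) + 1 - (k : ℤ)) := by
    intro k
    rw [hvV]
    exact rfl2_V m hm0 (j : ℤ) (k : ℤ)
  have hstep : ∀ k : ℕ, k < 2 * m →
      ∃ n : ℕ, n < 2 * m ∧ (n + k) % 2 = 1 ∧ rfl2 u (v k) = v n := by
    intro k hk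
    set a : ℤ := 2 * (j : ℤ) + 1 - (k : ℤ) with ha
    have h2m : (0 : ℤ) < 2 * m := by positivity
    set n : ℕ := (a % (2 * m)).toNat with hn
    have hnn : (n : ℤ) = a % (2 * m) :=
      Int.toNat_of_nonneg (Int.emod_nonneg a h2m.ne')
    have hlt : a % (2 * m) < 2 * m := Int.emod_lt_of_pos a h2m
    have hlt' : (n : ℤ) < 2 * m := by rw [hnn]; exact hlt
    have hnlt : n < 2 * m := by exact_mod_cast hlt'
    have hdiv : (2 * m : ℤ) ∣ a - n := by
      refine ⟨a / (2 * m), ?_⟩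
      have := Int.mul_ediv_add_emod a (2 * m)
      rw [hnn]
      linarith
    have hpar : (n + k) % 2 = 1 := by
      have hmod2 : a % (2 * (m : ℤ)) % 2 = a % 2 := Int.emod_emod_of_dvd a ⟨m, by ring⟩
      have h5 : (n : ℤ) % 2 = (2 * (j : ℤ) + 1 - (k : ℤ)) % 2 := by rw [hnn, hmod2, ha]
      omega
    refine ⟨n, hnlt, hpar, ?_⟩
    rw [hRV k, hvV n]
    exact (key a n).mpr hdiv
  have hRF12 : rfl2 u '' F₁ ⊆ F₂ := by
    rintro x ⟨y, hy, rfl⟩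
    rw [hF₁] at hy
    obtain ⟨k, hk, hke, rfl⟩ := hy
    obtain ⟨n, hnlt, hpar, hrn⟩ := hstep k hk
    rw [hF₂]
    refine ⟨n, hnlt, ?_, hrn⟩
    rw [Nat.odd_iff]
    rcases hke with ⟨c, rfl⟩
    omega
  have hRF21 : rfl2 u '' F₂ ⊆ F₁ := by
    rintro x ⟨y, hy, rfl⟩
    rw [hF₂] at hy
    obtain ⟨k, hk, hko, rfl⟩ := hy
    obtain ⟨n, hnlt, hpar, hrn⟩ := hstep k hk
    rw [hF₁]
    refine ⟨n, hnlt, ?_, hrn⟩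
    rw [Nat.even_iff]
    rcases hko with ⟨c, rfl⟩
    omega
  have hRF : rfl2 u '' F₁ = F₂ := by
    refine subset_antisymm hRF12 ?_
    intro x hx
    refine ⟨rfl2 u x, hRF21 ⟨x, hx, rfl⟩, hinv x⟩
  have himg : rfl2 u '' (F₁ ∩ fiber (Submodule.span ℝ {v (j + 1) - v j}) T)
      = F₂ ∩ fiber (Submodule.span ℝ {v (j + 1) - v j}) T := by
    rw [Set.image_inter hinj, hRF, hfib]
  rw [← himg, Set.ncard_image_of_injective _ hinj]
end

section
/- (Hajdu–Tijdeman) Let ψ, φ : ℕ₀^d → ℕ₀ be functions with finite support, let v = (ν₁, …, ν_d) ∈ ℤ^d be nonzero with gcd(ν₁, …, ν_d) = 1, and let S = ℝ·v. Then the X-rays of ψ and φ parallel to S coincide (i.e., for every affine line T parallel to S, Σ_{x ∈ T ∩ ℕ₀^d} ψ(x) = Σ_{x ∈ T ∩ ℕ₀^d} φ(x)) if and only if the polynomial Σ_a ψ(a)·X^a − Σ_b φ(b)·X^b ∈ ℤ[X₁, …, X_d] is divisible by X^{v⁺} − X^{v⁻}, where v⁺ and v⁻ are the componentwise positive and negative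 parts of v (so v = v⁺ − v⁻), and X^a denotes the monomial X₁^{α₁}⋯X_d^{α_d} for a = (α₁, …, α_d) ∈ ℕ₀^d. -/
open Set

variable {d : ℕ}

/-- The canonical embedding of `ℕ₀^d` into `ℝ^d`. -/
def embedN (x : Fin d → ℕ) : Fin d → ℝ := fun i => (x i : ℝ)

/-- The X-ray of a finitely supported function `ψ : ℕ₀^d → ℕ₀` parallel to `S`,
evaluated at the affine line corresponding to `T`. -/
noncomputable def xrayFun (S : Submodule ℝ (Fin d → ℝ)) (ψ : (Fin d → ℕ) → ℕ)
    (T : (Fin d → ℝ) ⧸ S) : ℕ :=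
  ∑ᶠ x ∈ {x : Fin d → ℕ | (Submodule.Quotient.mk (embedN x) : (Fin d → ℝ) ⧸ S) = T}, ψ x

/-- The generating polynomial `Σ_a ψ(a)·X^a ∈ ℤ[X₁,…,X_d]`. -/
noncomputable def polyOf (ψ : (Fin d → ℕ) → ℕ) : MvPolynomial (Fin d) ℤ :=
  ∑ᶠ a : Fin d → ℕ, MvPolynomial.monomial (Finsupp.equivFunOnFinite.symm a) ((ψ a : ℤ))



namespace HT
variable {d : ℕ}

def Qmk (v : Fin d → ℤ) (m : Fin d →₀ ℕ) : (Fin d → ℤ) ⧸ Submodule.span ℤ {v} :=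
  Submodule.Quotient.mk (fun i => (m i : ℤ))

noncomputable def Phi (v : Fin d → ℤ) :
    MvPolynomial (Fin d) ℤ →+* AddMonoidAlgebra ℤ ((Fin d → ℤ) ⧸ Submodule.span ℤ {v}) :=
  MvPolynomial.eval₂Hom (Int.castRingHom _)
    fun i => AddMonoidAlgebra.single (Submodule.Quotient.mk (Pi.single i 1)) 1

lemma Phi_monomial (v : Fin d → ℤ) (m : Fin d →₀ ℕ) (c : ℤ) :
    Phi v (MvPolynomial.monomial m c) = AddMonoidAlgebra.single (Qmk v m) c := by
  classical
  rw [Phi, MvPolynomial.eval₂Hom_monomial]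
  have h1 : (m.prod fun i e =>
      (AddMonoidAlgebra.single (Submodule.Quotient.mk (Pi.single i 1) :
        (Fin d → ℤ) ⧸ Submodule.span ℤ {v}) (1:ℤ)) ^ e) =
      AddMonoidAlgebra.single (Qmk v m) 1 := by
    rw [Finsupp.prod_fintype]
    · have : ∀ i : Fin d,
          (AddMonoidAlgebra.single (Submodule.Quotient.mk (Pi.single i 1) :
            (Fin d → ℤ) ⧸ Submodule.span ℤ {v}) (1:ℤ)) ^ (m i) =
          AddMonoidAlgebra.single (Submodule.Quotient.mk (Pi.single i (m i : ℤ))) 1 := by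
        intro i
        rw [AddMonoidAlgebra.single_pow, one_pow, ← Submodule.mkQ_apply, ← map_nsmul]
        have harg : (m i) • (Pi.single i 1 : Fin d → ℤ) = Pi.single i (m i : ℤ) := by
          ext j
          by_cases h : j = i <;> simp [h, Pi.single_apply]
        rw [harg, Submodule.mkQ_apply]
      simp only [this, AddMonoidAlgebra.prod_single, Finset.prod_const_one]
      congr 1
      rw [Qmk]
      have : ∑ i : Fin d, (Submodule.Quotient.mk (Pi.single i (m i : ℤ)) :
          (Fin d → ℤ) ⧸ Submodule.span ℤ {v}) =
          Submodule.Quotient.mk (∑ i : Fin d, Pi.single i (m i : ℤ)) := by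
        simp only [← Submodule.mkQ_apply, ← map_sum]
      rw [this, Finset.univ_sum_single]
    · intro i; simp
  rw [h1, show ((Int.castRingHom (AddMonoidAlgebra ℤ ((Fin d → ℤ) ⧸ Submodule.span ℤ {v}))) c) =
    AddMonoidAlgebra.single 0 c from rfl, AddMonoidAlgebra.single_mul_single, zero_add, mul_one]

end HT

namespace HT2
open HT
open scoped Classical
variable {d : ℕ}

lemma Phi_apply (v : Fin d → ℤ) (f : MvPolynomial (Fin d) ℤ) :
    Phi v f = ∑ m ∈ f.support, AddMonoidAlgebra.single (Qmk v m) (MvPolynomial.coeff m f) := by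
  conv_lhs => rw [MvPolynomial.as_sum f]
  rw [map_sum]
  exact Finset.sum_congr rfl fun m _ => Phi_monomial v m _

lemma Phi_apply_point (v : Fin d → ℤ) (f : MvPolynomial (Fin d) ℤ)
    (q : (Fin d → ℤ) ⧸ Submodule.span ℤ {v}) :
    (Phi v f).coeff q = ∑ m ∈ f.support.filter (fun m => Qmk v m = q), MvPolynomial.coeff m f := by
  classical
  rw [Phi_apply, AddMonoidAlgebra.coeff_sum, Finsupp.finset_sum_apply, Finset.sum_filter]
  exact Finset.sum_congr rfl fun m _ => by rw [AddMonoidAlgebra.coeff_single, Finsupp.single_apply]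

lemma Qmk_eq_iff (v : Fin d → ℤ) (m m' : Fin d →₀ ℕ) :
    Qmk v m = Qmk v m' ↔
      ∃ t : ℤ, ((fun i => (m i : ℤ)) - fun i => (m' i : ℤ)) = t • v := by
  rw [Qmk, Qmk, Submodule.Quotient.eq, Submodule.mem_span_singleton]
  exact ⟨fun ⟨t, ht⟩ => ⟨t, ht.symm⟩, fun ⟨t, ht⟩ => ⟨t, ht.symm⟩⟩

lemma Phi_eq_zero_iff (v : Fin d → ℤ) (f : MvPolynomial (Fin d) ℤ) :
    Phi v f = 0 ↔ ∀ m' ∈ f.support,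
      (∑ m ∈ f.support.filter (fun m => Qmk v m = Qmk v m'), MvPolynomial.coeff m f) = 0 := by
  classical
  constructor
  · intro h m' _
    rw [← Phi_apply_point, h]; rfl
  · intro h
    ext q
    rw [AddMonoidAlgebra.coeff_zero, Finsupp.coe_zero, Pi.zero_apply, Phi_apply_point]
    by_cases hq : ∃ m' ∈ f.support, Qmk v m' = q
    · obtain ⟨m', hm', rfl⟩ := hq
      exact h m' hm'
    · rw [Finset.filter_false_of_mem, Finset.sum_empty]
      intro m hm hmq
      exact hq ⟨m, hm, hmq⟩

end HT2

namespace HT3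
open HT HT2
open scoped Classical
variable {d : ℕ}

noncomputable def D (v : Fin d → ℤ) : MvPolynomial (Fin d) ℤ :=
  MvPolynomial.monomial (Finsupp.equivFunOnFinite.symm fun i => (v i).toNat) 1 -
  MvPolynomial.monomial (Finsupp.equivFunOnFinite.symm fun i => (-(v i)).toNat) 1

lemma Phi_D (v : Fin d → ℤ) : Phi v (D v) = 0 := by
  rw [D, map_sub, Phi_monomial, Phi_monomial, sub_eq_zero]
  congr 1
  rw [Qmk_eq_iff]
  refine ⟨1, ?_⟩
  funext i
  simp only [Pi.sub_apply, Finsupp.coe_equivFunOnFinite_symm, one_smul]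
  omega

lemma dvd_of_phi_eq_zero (v : Fin d → ℤ) (i₀ : Fin d) (hpos : 0 < v i₀) :
    ∀ (n : ℕ) (f : MvPolynomial (Fin d) ℤ), (∑ m ∈ f.support, m i₀) ≤ n →
      Phi v f = 0 → D v ∣ f := by
  intro n
  induction n using Nat.strong_induction_on with
  | _ n ih =>
    intro f hn hf
    by_cases hf0 : f = 0
    · simp [hf0]
    have hsupp : f.support.Nonempty :=
      Finset.nonempty_iff_ne_empty.2 (fun h => hf0 (MvPolynomial.support_eq_empty.1 h))
    obtain ⟨a, ha, hamax⟩ :=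
      f.support.exists_max_image (fun m => ∑ i, v i * (m i : ℤ)) hsupp
    have hca : MvPolynomial.coeff a f ≠ 0 := MvPolynomial.mem_support_iff.1 ha
    -- there is another support element in the same class
    have hex : ∃ b ∈ f.support, b ≠ a ∧ Qmk v b = Qmk v a := by
      by_contra hno
      push_neg at hno
      have hfil : f.support.filter (fun m => Qmk v m = Qmk v a) = {a} := by
        ext m
        simp only [Finset.mem_filter, Finset.mem_singleton]
        constructor
        · rintro ⟨hm, hq⟩
          by_contra hne
          exact (hno m hm hne) hq
        · rintro rfl; exact ⟨ha, rfl⟩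
      have := (Phi_eq_zero_iff v f).1 hf a ha
      rw [hfil, Finset.sum_singleton] at this
      exact hca this
    obtain ⟨b, hb, hba, hbq⟩ := hex
    obtain ⟨t, ht⟩ := (Qmk_eq_iff v b a).1 hbq
    have hti : ∀ i, (b i : ℤ) - (a i : ℤ) = t * v i := by
      intro i
      have := congrFun ht i
      simpa using this
    have htne : t ≠ 0 := by
      rintro rfl
      apply hba
      ext i
      have := hti i
      omega
    -- t < 0
    have hP : 0 < ∑ i, v i * v i := by
      apply Finset.sum_pos' (fun i _ => mul_self_nonneg _)
      exact ⟨i₀, Finset.mem_univ _, mul_pos hpos hpos⟩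
    have hwle : ∑ i, v i * (b i : ℤ) ≤ ∑ i, v i * (a i : ℤ) := hamax b hb
    have hdiff : (∑ i, v i * (b i : ℤ)) - (∑ i, v i * (a i : ℤ)) = t * ∑ i, v i * v i := by
      rw [← Finset.sum_sub_distrib, Finset.mul_sum]
      refine Finset.sum_congr rfl fun i _ => ?_
      linear_combination (v i) * hti i
    have hle0 : t * (∑ i, v i * v i) ≤ 0 := by rw [← hdiff]; linarith
    have htneg : t ≤ -1 := by
      rcases lt_or_ge t 0 with h | h
      · omega
      · exfalso
        have h1 : 0 < t := lt_of_le_of_ne h (Ne.symm htne)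
        nlinarith [mul_pos h1 hP]
    -- coordinatewise facts
    have hkey : ∀ i, ((v i).toNat ≤ a i) ∧ (0 : ℤ) ≤ (a i : ℤ) - v i := by
      intro i
      rcases le_or_gt (v i) 0 with h | h
      · have h0 : (0:ℤ) ≤ (a i : ℤ) := Int.natCast_nonneg _
        constructor <;> omega
      · have hb0 : (0:ℤ) ≤ (b i : ℤ) := Int.natCast_nonneg _
        have h1 := hti i
        have hmul : t * v i ≤ -1 * v i := mul_le_mul_of_nonneg_right htneg (le_of_lt h)
        have hva : (v i : ℤ) ≤ (a i : ℤ) := by linarith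
        constructor <;> omega
    set c := MvPolynomial.coeff a f with hc
    set e : Fin d → ℕ := fun i => a i - (v i).toNat with he
    set aN : Fin d → ℕ := fun i => ((a i : ℤ) - v i).toNat with haN
    have hsum1 : Finsupp.equivFunOnFinite.symm e +
        Finsupp.equivFunOnFinite.symm (fun i => (v i).toNat) = a := by
      ext i
      simp only [Finsupp.add_apply, Finsupp.coe_equivFunOnFinite_symm, he]
      have := (hkey i).1
      omega
    have hsum2 : Finsupp.equivFunOnFinite.symm e +
        Finsupp.equivFunOnFinite.symm (fun i => (-(v i)).toNat) =
        Finsupp.equivFunOnFinite.symm aN := by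
      ext i
      simp only [Finsupp.add_apply, Finsupp.coe_equivFunOnFinite_symm, he, haN]
      have h1 := (hkey i).1
      have h2 := (hkey i).2
      omega
    set g := f - MvPolynomial.monomial (Finsupp.equivFunOnFinite.symm e) c * D v with hg
    have hgf : f = g + MvPolynomial.monomial (Finsupp.equivFunOnFinite.symm e) c * D v := by
      rw [hg]; ring
    have hPg : Phi v g = 0 := by
      rw [hg, map_sub, map_mul, Phi_D, mul_zero, hf, sub_zero]
    have hgeq : g = f - MvPolynomial.monomial a c +
        MvPolynomial.monomial (Finsupp.equivFunOnFinite.symm aN) c := by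
      rw [hg, D, mul_sub, MvPolynomial.monomial_mul, MvPolynomial.monomial_mul, mul_one,
        hsum1, hsum2]
      ring
    have hcoeffg : ∀ m, MvPolynomial.coeff m g = MvPolynomial.coeff m f -
        (if a = m then c else 0) + (if Finsupp.equivFunOnFinite.symm aN = m then c else 0) := by
      intro m
      rw [hgeq, MvPolynomial.coeff_add, MvPolynomial.coeff_sub, MvPolynomial.coeff_monomial,
        MvPolynomial.coeff_monomial]
    have haNi : aN i₀ < a i₀ := by
      have h1 := (hkey i₀).1
      have h2 := (hkey i₀).2
      simp only [haN]
      omega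
    have haNa : Finsupp.equivFunOnFinite.symm aN ≠ a := by
      intro hEq
      have h := DFunLike.congr_fun hEq i₀
      rw [Finsupp.coe_equivFunOnFinite_symm] at h
      omega
    have hsub : g.support ⊆ insert (Finsupp.equivFunOnFinite.symm aN) (f.support.erase a) := by
      intro m hm
      rw [Finset.mem_insert, Finset.mem_erase]
      by_contra hcon
      push_neg at hcon
      obtain ⟨h1, h2⟩ := hcon
      have hm' := MvPolynomial.mem_support_iff.1 hm
      rcases eq_or_ne m a with rfl | hma
      · rw [hcoeffg, if_pos rfl, if_neg haNa] at hm'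
        simp [hc] at hm'
      · have hmf : m ∉ f.support := h2 hma
        rw [hcoeffg, if_neg (fun h => hma h.symm), if_neg h1.symm,
          MvPolynomial.notMem_support_iff.1 hmf] at hm'
        simp at hm'
    have hai : a i₀ ≤ ∑ m ∈ f.support, m i₀ :=
      Finset.single_le_sum (f := fun m => m i₀) (fun m _ => Nat.zero_le _) ha
    have herase : ∑ m ∈ f.support, m i₀ = a i₀ + ∑ m ∈ f.support.erase a, m i₀ :=
      (Finset.add_sum_erase _ _ ha).symm
    have hlt : (∑ m ∈ g.support, m i₀) < ∑ m ∈ f.support, m i₀ := by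
      have h1 : ∑ m ∈ g.support, m i₀ ≤
          ∑ m ∈ insert (Finsupp.equivFunOnFinite.symm aN) (f.support.erase a), m i₀ :=
        Finset.sum_le_sum_of_subset hsub
      have h2 : ∑ m ∈ insert (Finsupp.equivFunOnFinite.symm aN) (f.support.erase a), m i₀ ≤
          aN i₀ + ∑ m ∈ f.support.erase a, m i₀ := by
        by_cases hmem : Finsupp.equivFunOnFinite.symm aN ∈ f.support.erase a
        · rw [Finset.insert_eq_self.2 hmem]
          omega
        · rw [Finset.sum_insert hmem, Finsupp.coe_equivFunOnFinite_symm]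
      have hv1 : 1 ≤ v i₀ := hpos
      have h3 := (hkey i₀).1
      omega
    have hvtoa : 1 ≤ a i₀ := by
      have h3 := (hkey i₀).1
      omega
    have hdvdg : D v ∣ g := by
      refine ih (n - 1) (by omega) g (by omega) hPg
    rw [hgf]
    exact dvd_add hdvdg (dvd_mul_left _ _)
end HT3

namespace HT4
open HT HT2 HT3
open scoped Classical
variable {d : ℕ}

lemma D_neg (v : Fin d → ℤ) : D (-v) = -(D v) := by
  rw [D, D]
  have h2 : (fun i => (-((-v) i)).toNat) = fun i => (v i).toNat := by
    funext i; simp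
  have h1 : (fun i => ((-v) i).toNat) = fun i => (-(v i)).toNat := rfl
  rw [h1, h2]
  ring

lemma phi_neg_eq_zero (v : Fin d → ℤ) (f : MvPolynomial (Fin d) ℤ)
    (h : Phi v f = 0) : Phi (-v) f = 0 := by
  rw [Phi_eq_zero_iff] at h ⊢
  intro m' hm'
  have hfil : f.support.filter (fun m => Qmk (-v) m = Qmk (-v) m') =
      f.support.filter (fun m => Qmk v m = Qmk v m') := by
    apply Finset.filter_congr
    intro m _
    rw [Qmk_eq_iff, Qmk_eq_iff]
    constructor
    · rintro ⟨t, ht⟩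
      exact ⟨-t, by rw [ht]; module⟩
    · rintro ⟨t, ht⟩
      exact ⟨-t, by rw [ht]; module⟩
  rw [hfil]
  exact h m' hm'

lemma dvd_iff_phi (v : Fin d → ℤ) (hv : v ≠ 0) (f : MvPolynomial (Fin d) ℤ) :
    D v ∣ f ↔ Phi v f = 0 := by
  constructor
  · rintro ⟨q, rfl⟩
    rw [map_mul, Phi_D, zero_mul]
  · intro h
    have hex : ∃ i, v i ≠ 0 := by
      by_contra hno
      push_neg at hno
      exact hv (funext hno)
    obtain ⟨i₀, hi₀⟩ := hex
    rcases lt_or_gt_of_ne hi₀ with hneg | hpos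
    · have h2 := phi_neg_eq_zero v f h
      have h3 : (0:ℤ) < (-v) i₀ := by simpa using hneg
      have := dvd_of_phi_eq_zero (-v) i₀ h3 _ f le_rfl h2
      rwa [D_neg, neg_dvd] at this
    · exact dvd_of_phi_eq_zero v i₀ hpos _ f le_rfl h

end HT4

namespace HT5
open HT HT2
open scoped Classical
variable {d : ℕ}

lemma exists_bezout (v : Fin d → ℤ) (hgcd : Finset.univ.gcd v = 1) :
    ∃ u : Fin d → ℤ, ∑ i, u i * v i = 1 := by
  have h1 : (1:ℤ) ∈ Submodule.span ℤ (Set.range v) := by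
    obtain ⟨g, hg⟩ := Submodule.IsPrincipal.principal (Ideal.span (Set.range v))
    have hdvd : ∀ i, g ∣ v i := by
      intro i
      have hvi : v i ∈ Ideal.span (Set.range v) := Ideal.subset_span ⟨i, rfl⟩
      rw [hg] at hvi
      exact Ideal.mem_span_singleton.1 hvi
    have hg1 : g ∣ (1:ℤ) := by
      rw [← hgcd]; exact Finset.dvd_gcd fun i _ => hdvd i
    obtain ⟨c, hc⟩ := hg1
    have h1g : (1:ℤ) ∈ Submodule.span ℤ ({g} : Set ℤ) :=
      Submodule.mem_span_singleton.2 ⟨c, by rw [smul_eq_mul]; linarith [hc]⟩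
    rw [← hg] at h1g
    exact h1g
  obtain ⟨u, hu⟩ := (Submodule.mem_span_range_iff_exists_fun ℤ).1 h1
  exact ⟨u, by simpa [smul_eq_mul] using hu⟩

lemma mk_real_iff (v : Fin d → ℤ) (hgcd : Finset.univ.gcd v = 1) (a b : Fin d → ℕ) :
    (Submodule.Quotient.mk (embedN a) :
       (Fin d → ℝ) ⧸ Submodule.span ℝ {fun i => (v i : ℝ)}) = Submodule.Quotient.mk (embedN b)
    ↔ Qmk v (Finsupp.equivFunOnFinite.symm a) = Qmk v (Finsupp.equivFunOnFinite.symm b) := by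
  rw [Submodule.Quotient.eq, Submodule.mem_span_singleton, Qmk_eq_iff]
  constructor
  · rintro ⟨t, ht⟩
    obtain ⟨u, hu⟩ := exists_bezout v hgcd
    set n : ℤ := ∑ i, u i * ((a i : ℤ) - (b i : ℤ)) with hn
    have hcomp : ∀ i, ((a i : ℝ) - (b i : ℝ)) = t * (v i : ℝ) := by
      intro i
      have := congrFun ht i
      simp only [embedN, Pi.sub_apply, Pi.smul_apply, smul_eq_mul] at this
      linarith [this]
    have hnt : (n : ℝ) = t := by
      have : (n : ℝ) = ∑ i, (u i : ℝ) * ((a i : ℝ) - (b i : ℝ)) := by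
        rw [hn]; push_cast; ring
      rw [this]
      calc ∑ i, (u i : ℝ) * ((a i : ℝ) - (b i : ℝ))
          = ∑ i, t * ((u i : ℝ) * (v i : ℝ)) := by
            refine Finset.sum_congr rfl fun i _ => by rw [hcomp i]; ring
        _ = t * ∑ i, (u i : ℝ) * (v i : ℝ) := by rw [Finset.mul_sum]
        _ = t * ((∑ i, u i * v i : ℤ) : ℝ) := by push_cast; ring
        _ = t := by rw [hu]; push_cast; ring
    refine ⟨n, ?_⟩
    funext i
    simp only [Pi.sub_apply, Finsupp.coe_equivFunOnFinite_symm, Pi.smul_apply,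
      smul_eq_mul]
    have hz : ((a i : ℤ) - (b i : ℤ) : ℝ) = ((n * v i : ℤ) : ℝ) := by
      push_cast
      rw [hcomp i, ← hnt]
    exact_mod_cast hz
  · rintro ⟨n, hnv⟩
    refine ⟨(n : ℝ), ?_⟩
    funext i
    have := congrFun hnv i
    simp only [Pi.sub_apply, Finsupp.coe_equivFunOnFinite_symm, Pi.smul_apply,
      smul_eq_mul] at this
    simp only [embedN, Pi.sub_apply, Pi.smul_apply, smul_eq_mul]
    exact_mod_cast this.symm

lemma polyOf_coeff (ψ : (Fin d → ℕ) → ℕ) (hψ : (Function.support ψ).Finite) (m : Fin d →₀ ℕ) :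
    MvPolynomial.coeff m (polyOf ψ) = (ψ ⇑m : ℤ) := by
  rw [polyOf]
  have hsub : Function.support
      (fun a => MvPolynomial.monomial (Finsupp.equivFunOnFinite.symm a) ((ψ a : ℤ))) ⊆
      ↑hψ.toFinset := by
    intro a ha
    simp only [Function.mem_support, ne_eq] at ha
    simp only [Set.Finite.coe_toFinset, Function.mem_support, ne_eq]
    intro h0
    exact ha (by rw [h0]; simp)
  rw [finsum_eq_finset_sum_of_support_subset _ hsub, MvPolynomial.coeff_sum]
  have hcond : ∀ a : Fin d → ℕ,
      MvPolynomial.coeff m (MvPolynomial.monomial (Finsupp.equivFunOnFinite.symm a) ((ψ a : ℤ)))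
      = if a = ⇑m then (ψ a : ℤ) else 0 := by
    intro a
    rw [MvPolynomial.coeff_monomial]
    congr 1
    simp only [eq_iff_iff]
    rw [Equiv.symm_apply_eq]
    constructor
    · rintro rfl; rfl
    · intro h; rw [h]; rfl
  simp only [hcond]
  rw [Finset.sum_ite_eq' hψ.toFinset (⇑m) (fun a => (ψ a : ℤ))]
  split_ifs with h
  · rfl
  · simp only [Set.Finite.mem_toFinset, Function.mem_support, ne_eq, not_not] at h
    rw [h]; rfl

end HT5


theorem hajdu_tijdeman
    (d : ℕ) (ψ φ : (Fin d → ℕ) → ℕ)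
    (hψ : (Function.support ψ).Finite) (hφ : (Function.support φ).Finite)
    (v : Fin d → ℤ) (hv : v ≠ 0) (hgcd : Finset.univ.gcd v = 1)
    (S : Submodule ℝ (Fin d → ℝ)) (hS : S = Submodule.span ℝ {fun i => (v i : ℝ)}) :
    (∀ T : (Fin d → ℝ) ⧸ S, xrayFun S ψ T = xrayFun S φ T) ↔
      (MvPolynomial.monomial (Finsupp.equivFunOnFinite.symm fun i => (v i).toNat) (1 : ℤ) -
        MvPolynomial.monomial (Finsupp.equivFunOnFinite.symm fun i => (-(v i)).toNat) (1 : ℤ)) ∣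
        (polyOf ψ - polyOf φ) := by
  classical
  subst hS
  have hDeq : (MvPolynomial.monomial (Finsupp.equivFunOnFinite.symm fun i => (v i).toNat) (1 : ℤ) -
      MvPolynomial.monomial (Finsupp.equivFunOnFinite.symm fun i => (-(v i)).toNat) (1 : ℤ)) =
      HT3.D v := rfl
  rw [hDeq, HT4.dvd_iff_phi v hv, HT2.Phi_eq_zero_iff]
  set f : MvPolynomial (Fin d) ℤ := polyOf ψ - polyOf φ with hf
  set E : Finset (Fin d → ℕ) := hψ.toFinset ∪ hφ.toFinset with hE
  have hsub1 : hψ.toFinset ⊆ E := Finset.subset_union_left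
  have hsub2 : hφ.toFinset ⊆ E := Finset.subset_union_right
  have hsm : ∀ m : Fin d →₀ ℕ, Finsupp.equivFunOnFinite.symm ⇑m = m := fun m =>
    Finsupp.equivFunOnFinite.symm_apply_apply m
  have hcoefff : ∀ m : Fin d →₀ ℕ, MvPolynomial.coeff m f = (ψ ⇑m : ℤ) - (φ ⇑m : ℤ) := by
    intro m
    rw [hf, MvPolynomial.coeff_sub, HT5.polyOf_coeff ψ hψ, HT5.polyOf_coeff φ hφ]
  have hsums : ∀ q : (Fin d → ℤ) ⧸ Submodule.span ℤ {v},
      ∑ m ∈ f.support.filter (fun m => HT.Qmk v m = q), MvPolynomial.coeff m f =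
      ∑ x ∈ E.filter (fun x => HT.Qmk v (Finsupp.equivFunOnFinite.symm x) = q),
        ((ψ x : ℤ) - (φ x : ℤ)) := by
    intro q
    have hinj : ∀ x ∈ E.filter (fun x => HT.Qmk v (Finsupp.equivFunOnFinite.symm x) = q),
        ∀ y ∈ E.filter (fun x => HT.Qmk v (Finsupp.equivFunOnFinite.symm x) = q),
        Finsupp.equivFunOnFinite.symm x = Finsupp.equivFunOnFinite.symm y → x = y :=
      fun x _ y _ h => Finsupp.equivFunOnFinite.symm.injective h
    have himg : ∑ m ∈ (E.filter (fun x => HT.Qmk v (Finsupp.equivFunOnFinite.symm x) = q)).image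
          (Finsupp.equivFunOnFinite.symm), MvPolynomial.coeff m f =
        ∑ x ∈ E.filter (fun x => HT.Qmk v (Finsupp.equivFunOnFinite.symm x) = q),
          ((ψ x : ℤ) - (φ x : ℤ)) := by
      rw [Finset.sum_image hinj]
      exact Finset.sum_congr rfl fun x _ => by rw [hcoefff]; rfl
    rw [← himg]
    apply Finset.sum_subset
    · intro m hm
      rw [Finset.mem_filter] at hm
      obtain ⟨hm1, hm2⟩ := hm
      rw [Finset.mem_image]
      refine ⟨⇑m, ?_, hsm m⟩
      rw [Finset.mem_filter]
      constructor
      · have hcm := MvPolynomial.mem_support_iff.1 hm1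
        rw [hcoefff] at hcm
        rw [hE, Finset.mem_union, Set.Finite.mem_toFinset, Set.Finite.mem_toFinset]
        by_contra hno
        push_neg at hno
        obtain ⟨h1, h2⟩ := hno
        rw [Function.mem_support, not_not] at h1 h2
        rw [h1, h2] at hcm
        simp at hcm
      · rw [hsm m]
        exact hm2
    · intro m hm hnot
      rw [Finset.mem_image] at hm
      obtain ⟨x, hx, rfl⟩ := hm
      rw [Finset.mem_filter] at hx
      by_contra hc0
      apply hnot
      rw [Finset.mem_filter]
      exact ⟨MvPolynomial.mem_support_iff.2 hc0, hx.2⟩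
  have hxr : ∀ (χ : (Fin d → ℕ) → ℕ) (hχ : (Function.support χ).Finite),
      hχ.toFinset ⊆ E → ∀ a : Fin d → ℕ,
      xrayFun (Submodule.span ℝ {fun i => (v i : ℝ)}) χ (Submodule.Quotient.mk (embedN a)) =
      ∑ x ∈ E.filter (fun x => HT.Qmk v (Finsupp.equivFunOnFinite.symm x) =
        HT.Qmk v (Finsupp.equivFunOnFinite.symm a)), χ x := by
    intro χ hχ hsubE a
    rw [xrayFun]
    have hfin : ({x : Fin d → ℕ |
        (Submodule.Quotient.mk (embedN x) :
          (Fin d → ℝ) ⧸ Submodule.span ℝ {fun i => (v i : ℝ)}) =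
        Submodule.Quotient.mk (embedN a)} ∩ Function.support χ).Finite :=
      hχ.subset Set.inter_subset_right
    rw [finsum_mem_eq_sum _ hfin]
    apply Finset.sum_subset
    · intro x hx
      rw [Set.Finite.mem_toFinset, Set.mem_inter_iff, Set.mem_setOf_eq] at hx
      rw [Finset.mem_filter]
      exact ⟨hsubE (hχ.mem_toFinset.2 hx.2), (HT5.mk_real_iff v hgcd x a).1 hx.1⟩
    · intro x hx hnx
      by_contra h0
      apply hnx
      rw [Set.Finite.mem_toFinset, Set.mem_inter_iff, Set.mem_setOf_eq]
      rw [Finset.mem_filter] at hx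
      exact ⟨(HT5.mk_real_iff v hgcd x a).2 hx.2, h0⟩
  constructor
  · intro hT m' hm'
    rw [hsums]
    have h := hT (Submodule.Quotient.mk (embedN ⇑m'))
    rw [hxr ψ hψ hsub1 ⇑m', hxr φ hφ hsub2 ⇑m'] at h
    rw [← hsm m', Finset.sum_sub_distrib, sub_eq_zero]
    exact_mod_cast h
  · intro hd T
    by_cases hT : ∃ a : Fin d → ℕ,
        (Submodule.Quotient.mk (embedN a) :
          (Fin d → ℝ) ⧸ Submodule.span ℝ {fun i => (v i : ℝ)}) = T
    · obtain ⟨a, rfl⟩ := hT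
      rw [hxr ψ hψ hsub1 a, hxr φ hφ hsub2 a]
      have hz : ∑ x ∈ E.filter (fun x => HT.Qmk v (Finsupp.equivFunOnFinite.symm x) =
          HT.Qmk v (Finsupp.equivFunOnFinite.symm a)), ((ψ x : ℤ) - (φ x : ℤ)) = 0 := by
        rw [← hsums]
        by_cases hq : ∃ m' ∈ f.support,
            HT.Qmk v m' = HT.Qmk v (Finsupp.equivFunOnFinite.symm a)
        · obtain ⟨m', hm', hqe⟩ := hq
          rw [← hqe]
          exact hd m' hm'
        · rw [Finset.filter_false_of_mem, Finset.sum_empty]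
          intro m hm hmq
          exact hq ⟨m, hm, hmq⟩
      rw [Finset.sum_sub_distrib, sub_eq_zero] at hz
      exact_mod_cast hz
    · rw [xrayFun, xrayFun]
      have hemp : {x : Fin d → ℕ |
          (Submodule.Quotient.mk (embedN x) :
            (Fin d → ℝ) ⧸ Submodule.span ℝ {fun i => (v i : ℝ)}) = T} = ∅ := by
        rw [Set.eq_empty_iff_forall_notMem]
        exact fun x hx => hT ⟨x, hx⟩
      rw [hemp]
      simp
end

section
/- Let v⁽¹⁾, …, v⁽ᵐ⁾ ∈ ℤ^d be nonzero reduced vectors spanning pairwise distinct lines, and let 𝒮 = {ℝ·v⁽¹⁾, …, ℝ·v⁽ᵐ⁾}. Two functions ψ, φ : ℕ₀^d → ℕ₀ with finite support have equal X-rays parallel to every line of 𝒮 if and only if there exists a polynomial p ∈ ℤ[X₁, …, X_d] such that Σ_a ψ(a)·X^a − Σ_b φ(b)·X^b = p · Π_{i=1}^{m} (X^{v⁽ⁱ⁾⁺} − X^{v⁽ⁱ⁾⁻}). -/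
open Set

variable {d : ℕ}

open scoped Classical

namespace HT
variable {d : ℕ}

def toZ {d : ℕ} (e : Fin d →₀ ℕ) : Fin d → ℤ := fun i => (e i : ℤ)

lemma toZ_symm (a : Fin d → ℕ) : toZ (Finsupp.equivFunOnFinite.symm a) = fun i => (a i : ℤ) := by
  funext i; simp [toZ]

lemma toZ_inj {e e' : Fin d →₀ ℕ} (h : toZ e = toZ e') : e = e' := by
  ext i
  have := congrFun h i
  simpa [toZ] using this

def onLine (v c : Fin d → ℤ) (e : Fin d →₀ ℕ) : Prop := ∃ k : ℤ, toZ e = c + k • v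

noncomputable def lineSum (f : MvPolynomial (Fin d) ℤ) (v c : Fin d → ℤ) : ℤ :=
  ∑ e ∈ f.support, if onLine v c e then f.coeff e else 0

lemma lineSum_eq_sum {f : MvPolynomial (Fin d) ℤ} {s : Finset (Fin d →₀ ℕ)}
    (h : f.support ⊆ s) (v c : Fin d → ℤ) :
    lineSum f v c = ∑ e ∈ s, if onLine v c e then f.coeff e else 0 := by
  refine Finset.sum_subset h (fun e _ he => ?_)
  simp [MvPolynomial.notMem_support_iff.mp he]

lemma lineSum_add (f g : MvPolynomial (Fin d) ℤ) (v c : Fin d → ℤ) :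
    lineSum (f + g) v c = lineSum f v c + lineSum g v c := by
  rw [lineSum_eq_sum (s := f.support ∪ g.support) (MvPolynomial.support_add) v c,
    lineSum_eq_sum (s := f.support ∪ g.support) (Finset.subset_union_left) v c,
    lineSum_eq_sum (s := f.support ∪ g.support) (Finset.subset_union_right) v c,
    ← Finset.sum_add_distrib]
  refine Finset.sum_congr rfl fun e _ => ?_
  by_cases h : onLine v c e <;> simp [h, MvPolynomial.coeff_add]

lemma lineSum_neg (f : MvPolynomial (Fin d) ℤ) (v c : Fin d → ℤ) :
    lineSum (-f) v c = - lineSum f v c := by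
  have hs : (-f).support = f.support := by
    ext e; simp [MvPolynomial.mem_support_iff]
  rw [lineSum, lineSum, hs, ← Finset.sum_neg_distrib]
  refine Finset.sum_congr rfl fun e _ => ?_
  by_cases h : onLine v c e <;> simp [h]

lemma lineSum_sub (f g : MvPolynomial (Fin d) ℤ) (v c : Fin d → ℤ) :
    lineSum (f - g) v c = lineSum f v c - lineSum g v c := by
  rw [sub_eq_add_neg, lineSum_add, lineSum_neg, sub_eq_add_neg]

lemma lineSum_monomial (e : Fin d →₀ ℕ) (r : ℤ) (v c : Fin d → ℤ) :
    lineSum (MvPolynomial.monomial e r) v c = if onLine v c e then r else 0 := by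
  rw [lineSum_eq_sum (s := {e}) MvPolynomial.support_monomial_subset v c]
  simp [MvPolynomial.coeff_monomial]

lemma onLine_congr {v c : Fin d → ℤ} {e e' : Fin d →₀ ℕ} (k₀ : ℤ)
    (h : toZ e' = toZ e + k₀ • v) : onLine v c e ↔ onLine v c e' := by
  constructor
  · rintro ⟨k, hk⟩
    exact ⟨k + k₀, by rw [h, hk]; module⟩
  · rintro ⟨k, hk⟩
    refine ⟨k - k₀, ?_⟩
    have : toZ e = toZ e' - k₀ • v := by rw [h]; abel
    rw [this, hk]; module

lemma onLine_shift {v c : Fin d → ℤ} (k : ℤ) (e : Fin d →₀ ℕ) :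
    onLine v (c + k • v) e ↔ onLine v c e := by
  constructor
  · rintro ⟨k', hk⟩; exact ⟨k + k', by rw [hk]; module⟩
  · rintro ⟨k', hk⟩; exact ⟨k' - k, by rw [hk]; module⟩

def ZLS (f : MvPolynomial (Fin d) ℤ) (v : Fin d → ℤ) : Prop := ∀ c, lineSum f v c = 0

noncomputable def Bin (v : Fin d → ℤ) : MvPolynomial (Fin d) ℤ :=
  MvPolynomial.monomial (Finsupp.equivFunOnFinite.symm fun t => (v t).toNat) 1 -
  MvPolynomial.monomial (Finsupp.equivFunOnFinite.symm fun t => (-(v t)).toNat) 1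

lemma zls_mul_bin (g : MvPolynomial (Fin d) ℤ) (v : Fin d → ℤ) : ZLS (g * Bin v) v := by
  intro c
  induction g using MvPolynomial.induction_on' with
  | monomial u a =>
      rw [Bin, mul_sub, MvPolynomial.monomial_mul, MvPolynomial.monomial_mul, mul_one,
        lineSum_sub, lineSum_monomial, lineSum_monomial]
      have hcong : onLine v c (u + Finsupp.equivFunOnFinite.symm fun t => (-(v t)).toNat) ↔
          onLine v c (u + Finsupp.equivFunOnFinite.symm fun t => (v t).toNat) := by
        refine onLine_congr 1 ?_
        funext i
        simp only [toZ, Finsupp.add_apply, Finsupp.coe_equivFunOnFinite_symm,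
          Pi.add_apply, Pi.smul_apply, smul_eq_mul]
        push_cast
        omega
      rw [← hcong]
      simp
  | add p q hp hq =>
      rw [add_mul, lineSum_add, hp, hq, add_zero]

lemma zls_of_dvd {f : MvPolynomial (Fin d) ℤ} {v : Fin d → ℤ} (h : Bin v ∣ f) : ZLS f v := by
  obtain ⟨g, rfl⟩ := h
  intro c
  rw [mul_comm]
  exact zls_mul_bin g v c


def Wt (v : Fin d → ℤ) (j : Fin d) (x : Fin d → ℤ) : ℤ := if 0 < v j then x j else -(x j)

lemma Wt_pos {v : Fin d → ℤ} {j : Fin d} (hj : v j ≠ 0) : 0 < Wt v j v := by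
  unfold Wt; split <;> omega

lemma Wt_add (v : Fin d → ℤ) (j : Fin d) (x : Fin d → ℤ) (k : ℤ) :
    Wt v j (x + k • v) = Wt v j x + k * Wt v j v := by
  unfold Wt; split <;> simp <;> ring

lemma dvd_aux (v : Fin d → ℤ) (j : Fin d) (hj : v j ≠ 0) (n : ℕ) :
    ∀ M : ℤ, ∀ f : MvPolynomial (Fin d) ℤ, ZLS f v →
      (∀ e ∈ f.support, Wt v j (toZ e) ≤ M) →
      (∑ e ∈ f.support, (M - Wt v j (toZ e)).toNat) ≤ n → Bin v ∣ f := by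
  induction n using Nat.strong_induction_on with
  | _ n ih =>
  intro M f hz hb hm
  by_cases hf : f = 0
  · simp [hf]
  have hne : f.support.Nonempty := by
    rw [Finset.nonempty_iff_ne_empty]
    simpa [MvPolynomial.support_eq_empty] using hf
  obtain ⟨c, hc, hmin⟩ := Finset.exists_min_image f.support (fun e => Wt v j (toZ e)) hne
  have hcc : f.coeff c ≠ 0 := MvPolynomial.mem_support_iff.mp hc
  have hex : ∃ e ∈ f.support, e ≠ c ∧ onLine v (toZ c) e := by
    by_contra hno
    push_neg at hno
    have h0 := hz (toZ c)
    rw [lineSum, Finset.sum_eq_single_of_mem c hc ?_] at h0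
    · rw [if_pos ⟨0, by simp⟩] at h0; exact hcc h0
    · intro b hbs hbc
      rw [if_neg (hno b hbs hbc)]
  obtain ⟨e, he, hec, k, hk⟩ := hex
  have hWv : 0 < Wt v j v := Wt_pos hj
  have hWe : Wt v j (toZ e) = Wt v j (toZ c) + k * Wt v j v := by rw [hk, Wt_add]
  have hk0 : k ≠ 0 := by
    rintro rfl
    exact hec (toZ_inj (by rw [hk]; simp))
  have hk1 : 1 ≤ k := by
    have hcle := hmin e he
    rcases lt_or_gt_of_ne hk0 with hlt | hgt
    · nlinarith
    · omega
  have hce : ∀ i, 0 ≤ (c i : ℤ) + v i := by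
    intro i
    have h1 : (e i : ℤ) = c i + k * v i := by
      have := congrFun hk i
      simpa [toZ] using this
    rcases le_or_gt 0 (v i) with hvi | hvi
    · positivity
    · nlinarith [Int.natCast_nonneg (e i), mul_nonneg (sub_nonneg.mpr hk1) (neg_nonneg.mpr hvi.le)]
  set a := f.coeff c with ha
  set cv : Fin d →₀ ℕ := Finsupp.equivFunOnFinite.symm fun i => ((c i : ℤ) + v i).toNat with hcv
  set cm : Fin d →₀ ℕ := Finsupp.equivFunOnFinite.symm fun i => ((c i : ℤ) - ((-(v i)).toNat : ℤ)).toNat with hcm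
  have htzcv : toZ cv = toZ c + (1 : ℤ) • v := by
    funext i
    have := hce i
    simp only [hcv, toZ, Finsupp.coe_equivFunOnFinite_symm, Pi.add_apply, Pi.smul_apply,
      smul_eq_mul, one_mul]
    omega
  have hA : cm + (Finsupp.equivFunOnFinite.symm fun t => (v t).toNat) = cv := by
    ext i
    have := hce i
    simp only [hcv, hcm, Finsupp.add_apply, Finsupp.coe_equivFunOnFinite_symm]
    omega
  have hB : cm + (Finsupp.equivFunOnFinite.symm fun t => (-(v t)).toNat) = c := by
    ext i
    have := hce i
    simp only [hcm, Finsupp.add_apply, Finsupp.coe_equivFunOnFinite_symm]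
    omega
  have hcvc : cv ≠ c := by
    intro hq
    apply hj
    have := congrFun htzcv j
    rw [hq] at this
    simpa [toZ] using this
  set g : MvPolynomial (Fin d) ℤ :=
    f + (MvPolynomial.monomial cv a - MvPolynomial.monomial c a) with hg
  have hfg : f = g - MvPolynomial.C a * MvPolynomial.monomial cm 1 * Bin v := by
    rw [hg, Bin, MvPolynomial.C_mul_monomial, mul_one, mul_sub, MvPolynomial.monomial_mul,
      MvPolynomial.monomial_mul, mul_one, hA, hB]
    ring
  have hzg : ZLS g v := by
    intro c'
    rw [hg, lineSum_add, hz, lineSum_sub, lineSum_monomial, lineSum_monomial,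
      ← onLine_congr (e := c) (e' := cv) 1 htzcv]
    simp
  have hsub : g.support ⊆ insert cv (f.support.erase c) := by
    intro x hx
    have hx' : g.coeff x ≠ 0 := MvPolynomial.mem_support_iff.mp hx
    by_cases h1 : x = cv
    · rw [h1]; exact Finset.mem_insert_self _ _
    · refine Finset.mem_insert_of_mem (Finset.mem_erase.mpr ⟨?_, ?_⟩)
      · intro hxc
        apply hx'
        rw [hg]
        subst hxc
        simp [MvPolynomial.coeff_monomial, if_neg (Ne.symm h1), hcvc, ha]
      · by_contra hxs
        apply hx'
        rw [hg]
        have hxc : x ≠ c := by rintro rfl; exact hxs hc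
        simp [MvPolynomial.coeff_monomial, if_neg (Ne.symm h1), if_neg (Ne.symm hxc),
          MvPolynomial.notMem_support_iff.mp hxs]
  have hWcv : Wt v j (toZ cv) = Wt v j (toZ c) + Wt v j v := by
    rw [htzcv, Wt_add]; ring
  have hWcvM : Wt v j (toZ cv) ≤ M := by
    have := hb e he
    nlinarith
  have hbg : ∀ x ∈ g.support, Wt v j (toZ x) ≤ M := by
    intro x hx
    rcases Finset.mem_insert.mp (hsub hx) with h1 | h1
    · rw [h1]; exact hWcvM
    · exact hb x (Finset.mem_of_mem_erase h1)
  -- measure decrease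
  have hdec : (∑ x ∈ g.support, (M - Wt v j (toZ x)).toNat) < n := by
    have h1 : (∑ x ∈ g.support, (M - Wt v j (toZ x)).toNat) ≤
        ∑ x ∈ insert cv (f.support.erase c), (M - Wt v j (toZ x)).toNat :=
      Finset.sum_le_sum_of_subset hsub
    have h2 : ∑ x ∈ insert cv (f.support.erase c), (M - Wt v j (toZ x)).toNat ≤
        (M - Wt v j (toZ cv)).toNat + ∑ x ∈ f.support.erase c, (M - Wt v j (toZ x)).toNat := by
      by_cases hmem : cv ∈ f.support.erase c
      · rw [Finset.insert_eq_self.mpr hmem]; omega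
      · rw [Finset.sum_insert hmem]
    have h3 : (M - Wt v j (toZ c)).toNat + ∑ x ∈ f.support.erase c, (M - Wt v j (toZ x)).toNat =
        ∑ x ∈ f.support, (M - Wt v j (toZ x)).toNat := Finset.add_sum_erase _ (fun x => (M - Wt v j (toZ x)).toNat) hc
    have h4 : (M - Wt v j (toZ cv)).toNat + 1 ≤ (M - Wt v j (toZ c)).toNat := by omega
    omega
  have hdg := ih _ hdec M g hzg hbg le_rfl
  rw [hfg]
  exact dvd_sub hdg (Dvd.intro_left _ rfl)

lemma dvd_of_zls {v : Fin d → ℤ} (hv : v ≠ 0) {f : MvPolynomial (Fin d) ℤ} (h : ZLS f v) :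
    Bin v ∣ f := by
  obtain ⟨j, hj⟩ := Function.ne_iff.mp hv
  by_cases hf : f = 0
  · simp [hf]
  have hne : (f.support.image fun e => Wt v j (toZ e)).Nonempty := by
    simp only [Finset.image_nonempty, Finset.nonempty_iff_ne_empty]
    simpa [MvPolynomial.support_eq_empty] using hf
  exact dvd_aux v j hj _ ((f.support.image fun e => Wt v j (toZ e)).max' hne) f h
    (fun e he => Finset.le_max' _ _ (Finset.mem_image_of_mem (fun e => Wt v j (toZ e)) he)) le_rfl


lemma toZ_add (a b : Fin d →₀ ℕ) : toZ (a + b) = toZ a + toZ b := by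
  funext i; simp [toZ]

lemma lineSum_mul_monomial (g : MvPolynomial (Fin d) ℤ) (u : Fin d →₀ ℕ) (v c : Fin d → ℤ) :
    lineSum (g * MvPolynomial.monomial u 1) v c = lineSum g v (c - toZ u) := by
  induction g using MvPolynomial.induction_on' with
  | monomial b r =>
      rw [MvPolynomial.monomial_mul, mul_one, lineSum_monomial, lineSum_monomial]
      refine if_congr ?_ rfl rfl
      unfold onLine
      constructor
      · rintro ⟨k, hk⟩
        refine ⟨k, ?_⟩
        rw [toZ_add] at hk
        have : toZ b = (c + k • v) - toZ u := by rw [← hk]; abel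
        rw [this]; abel
      · rintro ⟨k, hk⟩
        refine ⟨k, ?_⟩
        rw [toZ_add, hk]; abel
  | add p q hp hq =>
      rw [add_mul, lineSum_add, hp, hq, lineSum_add]

lemma exists_onLine_of_lineSum_ne_zero {g : MvPolynomial (Fin d) ℤ} {v c : Fin d → ℤ}
    (h : lineSum g v c ≠ 0) : ∃ e ∈ g.support, onLine v c e := by
  by_contra hno
  push_neg at hno
  apply h
  rw [lineSum]
  exact Finset.sum_eq_zero fun e he => if_neg (hno e he)

lemma zls_cancel {v w : Fin d → ℤ}
    (hvw : ∀ a b : ℤ, a • v = b • w → a = 0)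
    (g : MvPolynomial (Fin d) ℤ) (hz : ZLS (g * Bin v) w) : ZLS g w := by
  have hG : ∀ c, lineSum g w (c + v) = lineSum g w c := by
    intro c
    have h0 := hz (c + toZ (Finsupp.equivFunOnFinite.symm fun t => (v t).toNat))
    rw [Bin, mul_sub, lineSum_sub, lineSum_mul_monomial, lineSum_mul_monomial] at h0
    have e1 : c + toZ (Finsupp.equivFunOnFinite.symm fun t => (v t).toNat) -
        toZ (Finsupp.equivFunOnFinite.symm fun t => (v t).toNat) = c := by abel
    have e2 : c + toZ (Finsupp.equivFunOnFinite.symm fun t => (v t).toNat) -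
        toZ (Finsupp.equivFunOnFinite.symm fun t => (-(v t)).toNat) = c + v := by
      funext i
      simp only [toZ, Finsupp.coe_equivFunOnFinite_symm, Pi.add_apply, Pi.sub_apply]
      omega
    rw [e1, e2] at h0
    linarith
  have hGk : ∀ (c : Fin d → ℤ) (k : ℕ), lineSum g w (c + (k : ℤ) • v) = lineSum g w c := by
    intro c k
    induction k with
    | zero => simp
    | succ k ihk =>
        have : c + ((k + 1 : ℕ) : ℤ) • v = (c + (k : ℤ) • v) + v := by push_cast; module
        rw [this, hG, ihk]
  intro c
  by_contra hGc
  have hsel : ∀ k : ℕ, ∃ e ∈ g.support, onLine w (c + (k : ℤ) • v) e := by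
    intro k
    apply exists_onLine_of_lineSum_ne_zero
    rw [hGk]
    exact hGc
  choose sel hsel1 hsel2 using hsel
  have : ∃ k k' : ℕ, k ≠ k' ∧ sel k = sel k' := by
    obtain ⟨k, k', hkk, he⟩ := Finite.exists_ne_map_eq_of_infinite
      (fun k : ℕ => (⟨sel k, hsel1 k⟩ : {x // x ∈ g.support}))
    exact ⟨k, k', hkk, by simpa using he⟩
  obtain ⟨k, k', hkk, he⟩ := this
  obtain ⟨a, hka⟩ := hsel2 k
  obtain ⟨b, hkb⟩ := hsel2 k'
  rw [he, hkb] at hka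
  have hcomb : ((k : ℤ) - (k' : ℤ)) • v = (b - a) • w := by
    have : c + (k' : ℤ) • v + b • w = c + (k : ℤ) • v + a • w := hka
    have h2 : (k' : ℤ) • v + b • w = (k : ℤ) • v + a • w := by
      have := congrArg (fun x => x - c) this
      simpa [add_sub_cancel, add_comm, add_assoc, add_left_comm, sub_eq_iff_eq_add] using this
    rw [sub_smul, sub_smul]
    rw [sub_eq_sub_iff_add_eq_add]
    linear_combination (norm := module) h2.symm
  have := hvw _ _ hcomb
  have : (k : ℤ) = k' := by omega
  exact hkk (by exact_mod_cast this)

lemma prod_dvd_of_zls {ι : Type*} (s : Finset ι) (v : ι → Fin d → ℤ) :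
    (∀ i ∈ s, v i ≠ 0) →
    (∀ i ∈ s, ∀ j ∈ s, i ≠ j → ∀ a b : ℤ, a • v i = b • v j → a = 0) →
    ∀ f : MvPolynomial (Fin d) ℤ, (∀ i ∈ s, ZLS f (v i)) →
    (∏ i ∈ s, Bin (v i)) ∣ f := by
  induction s using Finset.cons_induction with
  | empty => intro _ _ f _; simp
  | cons a s ha ih =>
    intro hv0 hind f hz
    have h1 : Bin (v a) ∣ f :=
      dvd_of_zls (hv0 a (Finset.mem_cons_self a s)) (hz a (Finset.mem_cons_self a s))
    obtain ⟨g, rfl⟩ := h1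
    have h2 : ∀ i ∈ s, ZLS g (v i) := by
      intro i hi
      have hne : a ≠ i := by rintro rfl; exact ha hi
      refine zls_cancel (fun p q hpq => hind a (Finset.mem_cons_self a s) i
        (Finset.mem_cons_of_mem hi) hne p q hpq) g ?_
      have := hz i (Finset.mem_cons_of_mem hi)
      rwa [mul_comm] at this
    have h3 := ih (fun i hi => hv0 i (Finset.mem_cons_of_mem hi))
      (fun i hi j hj hij => hind i (Finset.mem_cons_of_mem hi) j (Finset.mem_cons_of_mem hj) hij)
      g h2
    rw [Finset.prod_cons]
    exact mul_dvd_mul_left _ h3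


lemma polyOf_coeff (ψ : (Fin d → ℕ) → ℕ) (hψ : (Function.support ψ).Finite) (e : Fin d →₀ ℕ) :
    (polyOf ψ).coeff e = (ψ (Finsupp.equivFunOnFinite e) : ℤ) := by
  have hsub : Function.support (fun a : Fin d → ℕ =>
      MvPolynomial.monomial (Finsupp.equivFunOnFinite.symm a) ((ψ a : ℤ))) ⊆ ↑hψ.toFinset := by
    intro a ha
    simp only [Function.mem_support, ne_eq] at ha
    simp only [Set.Finite.coe_toFinset, Function.mem_support, ne_eq]
    intro h0
    exact ha (by rw [h0]; simp)
  rw [polyOf, finsum_eq_finset_sum_of_support_subset _ hsub, MvPolynomial.coeff_sum,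
    Finset.sum_eq_single (Finsupp.equivFunOnFinite e)]
  · rw [MvPolynomial.coeff_monomial, if_pos (by simp)]
  · intro b hb hbe
    rw [MvPolynomial.coeff_monomial, if_neg]
    intro hcontra
    exact hbe (by rw [← hcontra]; simp)
  · intro hne
    have h0 : ψ (Finsupp.equivFunOnFinite e) = 0 := by
      by_contra hne'
      exact hne (hψ.mem_toFinset.mpr hne')
    rw [h0]
    simp [MvPolynomial.coeff_monomial]

lemma exists_int_smul {v : Fin d → ℤ} (hred : Finset.univ.gcd v = 1) {z : Fin d → ℤ} {t : ℝ}
    (h : ∀ i, (z i : ℝ) = t * (v i : ℝ)) : ∃ k : ℤ, z = k • v := by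
  have hvne : ∃ j, v j ≠ 0 := by
    by_contra hno
    push_neg at hno
    rw [Finset.gcd_eq_zero_iff.mpr (fun i _ => hno i)] at hred
    exact absurd hred (by norm_num)
  obtain ⟨j, hj⟩ := hvne
  have hcross : ∀ i, z i * v j = z j * v i := by
    intro i
    have : ((z i * v j : ℤ) : ℝ) = ((z j * v i : ℤ) : ℝ) := by
      push_cast
      rw [h i, h j]; ring
    exact_mod_cast this
  have hdvd : v j ∣ z j := by
    rw [← dvd_normalize_iff]
    have h1 : v j ∣ Finset.univ.gcd (fun i => z j * v i) :=
      Finset.dvd_gcd (fun i _ => ⟨z i, by rw [← hcross i]; ring⟩)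
    rwa [Finset.gcd_mul_left, hred, mul_one] at h1
  refine ⟨z j / v j, ?_⟩
  funext i
  have hk : v j * (z j / v j) = z j := Int.mul_ediv_cancel' hdvd
  have h2 : z i * v j = (z j / v j * v i) * v j := by
    have : (z j / v j * v i) * v j = (v j * (z j / v j)) * v i := by ring
    rw [this, hk, ← hcross i]
  have := mul_right_cancel₀ hj h2
  simpa [Pi.smul_apply, smul_eq_mul] using this

lemma mk_eq_iff {v : Fin d → ℤ} (hred : Finset.univ.gcd v = 1) (x y : Fin d → ℤ) :
    (Submodule.Quotient.mk (fun i => (x i : ℝ)) :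
        (Fin d → ℝ) ⧸ Submodule.span ℝ {fun t => ((v t : ℝ))}) =
      Submodule.Quotient.mk (fun i => (y i : ℝ)) ↔ ∃ k : ℤ, x = y + k • v := by
  rw [Submodule.Quotient.eq, Submodule.mem_span_singleton]
  constructor
  · rintro ⟨t, ht⟩
    have h : ∀ i, ((x - y) i : ℝ) = t * (v i : ℝ) := by
      intro i
      have := congrFun ht i
      simp only [Pi.smul_apply, smul_eq_mul, Pi.sub_apply] at this ⊢
      push_cast
      linarith [this]
    obtain ⟨k, hk⟩ := exists_int_smul hred h
    refine ⟨k, ?_⟩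
    funext i
    have := congrFun hk i
    simp only [Pi.sub_apply, Pi.smul_apply, smul_eq_mul, Pi.add_apply] at this ⊢
    omega
  · rintro ⟨k, hk⟩
    refine ⟨(k : ℝ), ?_⟩
    funext i
    have := congrFun hk i
    simp only [Pi.add_apply, Pi.smul_apply, smul_eq_mul, Pi.sub_apply] at this ⊢
    rw [this]
    push_cast
    ring

lemma xray_eq_lineSum {v : Fin d → ℤ} (hred : Finset.univ.gcd v = 1)
    (ψ : (Fin d → ℕ) → ℕ) (hψ : (Function.support ψ).Finite) (c : Fin d → ℤ) :
    (xrayFun (Submodule.span ℝ {fun t => ((v t : ℝ))}) ψ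
        (Submodule.Quotient.mk (fun i => (c i : ℝ))) : ℤ) = lineSum (polyOf ψ) v c := by
  classical
  set A : Set (Fin d → ℕ) := {x : Fin d → ℕ |
    (Submodule.Quotient.mk (embedN x) :
      (Fin d → ℝ) ⧸ Submodule.span ℝ {fun t => ((v t : ℝ))}) =
    Submodule.Quotient.mk (fun i => (c i : ℝ))} with hA
  have hfin : (A ∩ Function.support ψ).Finite := hψ.subset Set.inter_subset_right
  have hmem : ∀ a : Fin d → ℕ, a ∈ A ↔ onLine v c (Finsupp.equivFunOnFinite.symm a) := by
    intro a
    have hemb : embedN a = fun i => (((a i : ℤ) : ℝ)) := by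
      funext i; simp [embedN]
    rw [hA, Set.mem_setOf_eq, hemb, mk_eq_iff hred]
    unfold onLine
    constructor
    · rintro ⟨k, hk⟩
      refine ⟨k, ?_⟩
      rw [toZ_symm]
      funext i
      have := congrFun hk i
      simpa using this
    · rintro ⟨k, hk⟩
      refine ⟨k, ?_⟩
      rw [toZ_symm] at hk
      funext i
      have := congrFun hk i
      simpa using this
  have hsupp : (polyOf ψ).support ⊆ hψ.toFinset.image Finsupp.equivFunOnFinite.symm := by
    intro e he
    have := MvPolynomial.mem_support_iff.mp he
    rw [polyOf_coeff ψ hψ e] at this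
    have hne : ψ (Finsupp.equivFunOnFinite e) ≠ 0 := by exact_mod_cast this
    refine Finset.mem_image.mpr ⟨Finsupp.equivFunOnFinite e, hψ.mem_toFinset.mpr hne, by simp⟩
  rw [xrayFun, finsum_mem_eq_sum ψ hfin, lineSum_eq_sum hsupp,
    Finset.sum_image (fun a _ b _ h => (Equiv.injective _ h))]
  have hco : ∀ a, (polyOf ψ).coeff (Finsupp.equivFunOnFinite.symm a) = (ψ a : ℤ) := by
    intro a
    rw [polyOf_coeff ψ hψ]
    simp
  calc ((∑ x ∈ hfin.toFinset, ψ x : ℕ) : ℤ) = ∑ x ∈ hfin.toFinset, (ψ x : ℤ) := by push_cast; rfl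
    _ = ∑ a ∈ hψ.toFinset.filter (fun a => onLine v c (Finsupp.equivFunOnFinite.symm a)),
          (ψ a : ℤ) := by
        apply Finset.sum_congr _ (fun _ _ => rfl)
        ext a
        simp only [Set.Finite.mem_toFinset, Set.mem_inter_iff, Function.mem_support,
          Finset.mem_filter]
        rw [hmem a]
        tauto
    _ = ∑ a ∈ hψ.toFinset, if onLine v c (Finsupp.equivFunOnFinite.symm a)
          then (polyOf ψ).coeff (Finsupp.equivFunOnFinite.symm a) else 0 := by
        rw [Finset.sum_filter]
        exact Finset.sum_congr rfl (fun a _ => by rw [hco a])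


lemma indep_of_distinct_spans {v w : Fin d → ℤ} (hv : v ≠ 0) (hw : w ≠ 0)
    (hdist : Submodule.span ℝ {fun t => ((v t : ℝ))} ≠ Submodule.span ℝ {fun t => ((w t : ℝ))}) :
    ∀ a b : ℤ, a • v = b • w → a = 0 := by
  intro a b hab
  by_contra ha
  have hb : b ≠ 0 := by
    rintro rfl
    apply hv
    have : a • v = 0 := by rw [hab]; simp
    rcases smul_eq_zero.mp this with h | h
    · exact absurd h ha
    · exact h
  apply hdist
  have habR : ∀ t, (a : ℝ) * (v t : ℝ) = (b : ℝ) * (w t : ℝ) := by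
    intro t
    have := congrFun hab t
    simp only [Pi.smul_apply, smul_eq_mul] at this
    exact_mod_cast this
  have haR : (a : ℝ) ≠ 0 := Int.cast_ne_zero.mpr ha
  have hbR : (b : ℝ) ≠ 0 := Int.cast_ne_zero.mpr hb
  have h1 : (fun t => ((v t : ℝ))) = ((b : ℝ)/(a : ℝ)) • (fun t => ((w t : ℝ))) := by
    funext t
    simp only [Pi.smul_apply, smul_eq_mul]
    field_simp
    linarith [habR t]
  have h2 : (fun t => ((w t : ℝ))) = ((a : ℝ)/(b : ℝ)) • (fun t => ((v t : ℝ))) := by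
    funext t
    simp only [Pi.smul_apply, smul_eq_mul]
    field_simp
    linarith [habR t]
  apply le_antisymm
  · rw [Submodule.span_le, Set.singleton_subset_iff, h1]
    exact Submodule.smul_mem _ _ (Submodule.mem_span_singleton_self _)
  · rw [Submodule.span_le, Set.singleton_subset_iff, h2]
    exact Submodule.smul_mem _ _ (Submodule.mem_span_singleton_self _)

end HT

open HT in
theorem hajdu_tijdeman_several_directions
    (d m : ℕ) (v : Fin m → Fin d → ℤ)
    (hv0 : ∀ i, v i ≠ 0)
    (hred : ∀ i, Finset.univ.gcd (v i) = 1)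
    (hdist : ∀ i j : Fin m, i ≠ j →
      Submodule.span ℝ {fun t => ((v i t : ℝ))} ≠ Submodule.span ℝ {fun t => ((v j t : ℝ))})
    (ψ φ : (Fin d → ℕ) → ℕ)
    (hψ : (Function.support ψ).Finite) (hφ : (Function.support φ).Finite) :
    (∀ i : Fin m, ∀ T : (Fin d → ℝ) ⧸ (Submodule.span ℝ {fun t => ((v i t : ℝ))}),
        xrayFun (Submodule.span ℝ {fun t => ((v i t : ℝ))}) ψ T =
        xrayFun (Submodule.span ℝ {fun t => ((v i t : ℝ))}) φ T) ↔
      ∃ p : MvPolynomial (Fin d) ℤ,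
        polyOf ψ - polyOf φ =
          p * ∏ i : Fin m,
            (MvPolynomial.monomial (Finsupp.equivFunOnFinite.symm fun t => (v i t).toNat) (1 : ℤ) -
              MvPolynomial.monomial
                (Finsupp.equivFunOnFinite.symm fun t => (-(v i t)).toNat) (1 : ℤ)) := by
  have hBin : ∀ i : Fin m,
      (MvPolynomial.monomial (Finsupp.equivFunOnFinite.symm fun t => (v i t).toNat) (1 : ℤ) -
        MvPolynomial.monomial
          (Finsupp.equivFunOnFinite.symm fun t => (-(v i t)).toNat) (1 : ℤ)) = Bin (v i) :=
    fun i => rfl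
  constructor
  · intro hxr
    have hzls : ∀ i : Fin m, ZLS (polyOf ψ - polyOf φ) (v i) := by
      intro i c
      rw [lineSum_sub, ← xray_eq_lineSum (hred i) ψ hψ c, ← xray_eq_lineSum (hred i) φ hφ c,
        hxr i (Submodule.Quotient.mk (fun t => ((c t : ℝ))))]
      simp
    have hind : ∀ i ∈ Finset.univ, ∀ j ∈ (Finset.univ : Finset (Fin m)), i ≠ j →
        ∀ a b : ℤ, a • v i = b • v j → a = 0 := by
      intro i _ j _ hij a b hab
      exact indep_of_distinct_spans (hv0 i) (hv0 j) (hdist i j hij) a b hab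
    obtain ⟨p, hp⟩ := prod_dvd_of_zls Finset.univ v (fun i _ => hv0 i) hind
      (polyOf ψ - polyOf φ) (fun i _ => hzls i)
    refine ⟨p, ?_⟩
    simp only [hBin]
    rw [hp, mul_comm]
  · rintro ⟨p, hp⟩
    intro i T
    have hzi : ZLS (polyOf ψ - polyOf φ) (v i) := by
      apply zls_of_dvd
      rw [hp]
      simp only [hBin]
      exact Dvd.dvd.mul_left (Finset.dvd_prod_of_mem _ (Finset.mem_univ i)) p
    by_cases hT : ∃ x : Fin d → ℕ, (ψ x ≠ 0 ∨ φ x ≠ 0) ∧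
        (Submodule.Quotient.mk (embedN x) :
          (Fin d → ℝ) ⧸ (Submodule.span ℝ {fun t => ((v i t : ℝ))})) = T
    · obtain ⟨x₀, _, hx₀⟩ := hT
      have hTc : T = (Submodule.Quotient.mk (fun t => (((x₀ t : ℤ) : ℝ))) :
          (Fin d → ℝ) ⧸ (Submodule.span ℝ {fun t => ((v i t : ℝ))})) := by
        have hemb : embedN x₀ = fun t => (((x₀ t : ℤ) : ℝ)) := by
          funext t; simp [embedN]
        rw [← hx₀, hemb]
      have h1 := xray_eq_lineSum (hred i) ψ hψ (fun t => (x₀ t : ℤ))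
      have h2 := xray_eq_lineSum (hred i) φ hφ (fun t => (x₀ t : ℤ))
      have h3 := hzi (fun t => (x₀ t : ℤ))
      rw [lineSum_sub] at h3
      have : (xrayFun (Submodule.span ℝ {fun t => ((v i t : ℝ))}) ψ T : ℤ) =
          (xrayFun (Submodule.span ℝ {fun t => ((v i t : ℝ))}) φ T : ℤ) := by
        rw [hTc]
        omega
      exact_mod_cast this
    · push_neg at hT
      have hz1 : xrayFun (Submodule.span ℝ {fun t => ((v i t : ℝ))}) ψ T = 0 := by
        rw [xrayFun]
        apply finsum_mem_of_eqOn_zero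
        intro x hx
        by_contra hne
        exact (hT x (Or.inl hne)) hx
      have hz2 : xrayFun (Submodule.span ℝ {fun t => ((v i t : ℝ))}) φ T = 0 := by
        rw [xrayFun]
        apply finsum_mem_of_eqOn_zero
        intro x hx
        by_contra hne
        exact (hT x (Or.inr hne)) hx
      rw [hz1, hz2]
end

section
/- (Stability jump) Let 𝒮 be a set of m 1-dimensional linear subspaces of ℝ^d and let F₁, F₂ ⊆ ℝ^d be finite with |F₁| = |F₂|. If Δ_𝒮(F₁, F₂) < 2(m − 1), then F₁ and F₂ are tomographically equivalent with respect to 𝒮, i.e., Δ_𝒮(F₁, F₂) = 0. The same statement holds when F₁, F₂ ⊆ ℤ^d and 𝒮 consists of lattice lines. -/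
open Set

variable {d : ℕ}

open Finset Polynomial


lemma multiset_exists_tuple (A : Multiset ℝ) :
    ∃ (n : ℕ) (x : Fin n → ℝ), (Finset.univ.val.map x) = A ∧ n = Multiset.card A := by
  refine ⟨A.toList.length, A.toList.get, ?_, by simp⟩
  rw [Fin.univ_val_map, List.ofFn_get, Multiset.coe_toList]

lemma multiset_esymm_eq (A B : Multiset ℝ) (hc : Multiset.card A = Multiset.card B)
    (hp : ∀ r, 1 ≤ r → r ≤ Multiset.card A → (A.map (· ^ r)).sum = (B.map (· ^ r)).sum) :
    ∀ k, k ≤ Multiset.card A → A.esymm k = B.esymm k := by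
  obtain ⟨n, x, hx, hn⟩ := multiset_exists_tuple A
  obtain ⟨n', y, hy, hn'⟩ := multiset_exists_tuple B
  -- power sums via aeval
  have hpsum : ∀ (m : ℕ) (z : Fin m → ℝ) (C : Multiset ℝ), (Finset.univ.val.map z) = C →
      ∀ r, MvPolynomial.aeval z (MvPolynomial.psum (Fin m) ℝ r) = (C.map (· ^ r)).sum := by
    intro m z C hzC r
    rw [MvPolynomial.psum, map_sum]
    simp only [map_pow, MvPolynomial.aeval_X]
    rw [← hzC, Multiset.map_map]
    rfl
  have hesymm : ∀ (m : ℕ) (z : Fin m → ℝ) (C : Multiset ℝ), (Finset.univ.val.map z) = C →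
      ∀ r, MvPolynomial.aeval z (MvPolynomial.esymm (Fin m) ℝ r) = C.esymm r := by
    intro m z C hzC r
    rw [MvPolynomial.aeval_esymm_eq_multiset_esymm, hzC]
  -- Newton recurrence, realized over ℝ
  have hrecA : ∀ k : ℕ, (k : ℝ) * A.esymm k = (-1) ^ (k + 1) *
      ∑ a ∈ Finset.HasAntidiagonal.antidiagonal k with a.1 < k,
        (-1) ^ a.1 * A.esymm a.1 * (A.map (· ^ a.2)).sum := by
    intro k
    have := congrArg (MvPolynomial.aeval x) (MvPolynomial.mul_esymm_eq_sum (Fin n) ℝ k)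
    simpa only [map_mul, map_sum, map_pow, map_neg, map_one, map_natCast,
      hesymm n x A hx, hpsum n x A hx] using this
  have hrecB : ∀ k : ℕ, (k : ℝ) * B.esymm k = (-1) ^ (k + 1) *
      ∑ a ∈ Finset.HasAntidiagonal.antidiagonal k with a.1 < k,
        (-1) ^ a.1 * B.esymm a.1 * (B.map (· ^ a.2)).sum := by
    intro k
    have := congrArg (MvPolynomial.aeval y) (MvPolynomial.mul_esymm_eq_sum (Fin n') ℝ k)
    simpa only [map_mul, map_sum, map_pow, map_neg, map_one, map_natCast,
      hesymm n' y B hy, hpsum n' y B hy] using this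
  intro k
  induction k using Nat.strong_induction_on with
  | _ k ih =>
    intro hk
    rcases Nat.eq_zero_or_pos k with rfl | hk0
    · simp [Multiset.esymm]
    have hmul : (k : ℝ) * A.esymm k = (k : ℝ) * B.esymm k := by
      rw [hrecA, hrecB]
      congr 1
      refine Finset.sum_congr rfl ?_
      intro a ha
      simp only [Finset.mem_filter, Finset.HasAntidiagonal.mem_antidiagonal] at ha
      have h1 : A.esymm a.1 = B.esymm a.1 := ih a.1 ha.2 (le_trans (le_of_lt ha.2) hk)
      have h2 : (A.map (· ^ a.2)).sum = (B.map (· ^ a.2)).sum := by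
        refine hp a.2 ?_ ?_ <;> omega
      rw [h1, h2]
    have hkne : (k : ℝ) ≠ 0 := Nat.cast_ne_zero.mpr hk0.ne'
    exact mul_left_cancel₀ hkne hmul

lemma multiset_eq_of_power_sums (A B : Multiset ℝ) (hc : Multiset.card A = Multiset.card B)
    (hp : ∀ r, 1 ≤ r → r ≤ Multiset.card A → (A.map (· ^ r)).sum = (B.map (· ^ r)).sum) :
    A = B := by
  have hes := multiset_esymm_eq A B hc hp
  have hprod : (A.map fun a => X - Polynomial.C a).prod = (B.map fun a => X - Polynomial.C a).prod := by
    have hA : (A.map fun a => X - Polynomial.C a).prod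
        = ((A.map Neg.neg).map fun a => X + Polynomial.C a).prod := by
      rw [Multiset.map_map]; congr 1; apply Multiset.map_congr rfl
      intro a _; simp [sub_eq_add_neg]
    have hB : (B.map fun a => X - Polynomial.C a).prod
        = ((B.map Neg.neg).map fun a => X + Polynomial.C a).prod := by
      rw [Multiset.map_map]; congr 1; apply Multiset.map_congr rfl
      intro a _; simp [sub_eq_add_neg]
    rw [hA, hB, Multiset.prod_X_add_C_eq_sum_esymm, Multiset.prod_X_add_C_eq_sum_esymm]
    simp only [Multiset.card_map, hc]
    refine Finset.sum_congr rfl ?_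
    intro j hj
    simp only [Finset.mem_range] at hj
    rw [Multiset.esymm_neg, Multiset.esymm_neg, hes j (by omega)]
  have := congrArg Polynomial.roots hprod
  rwa [Polynomial.roots_multiset_prod_X_sub_C, Polynomial.roots_multiset_prod_X_sub_C] at this


lemma exists_dual_ne_zero {V : Type*} [AddCommGroup V] [Module ℝ V]
    (s : Finset V) (hs : ∀ v ∈ s, v ≠ 0) :
    ∃ φ : Module.Dual ℝ V, ∀ v ∈ s, φ v ≠ 0 := by
  classical
  induction s using Finset.induction with
  | empty => exact ⟨0, by simp⟩
  | @insert v s hnotmem ih =>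
    obtain ⟨φ, hφ⟩ := ih (fun w hw => hs w (Finset.mem_insert_of_mem hw))
    have hv : v ≠ 0 := hs v (Finset.mem_insert_self v s)
    obtain ⟨φ₀, hφ₀⟩ : ∃ φ₀ : Module.Dual ℝ V, φ₀ v ≠ 0 := by
      by_contra hcon
      push_neg at hcon
      exact hv ((Module.forall_dual_apply_eq_zero_iff ℝ v).mp hcon)
    -- choose ε avoiding finitely many bad values
    set bad : Finset ℝ :=
      insert (-(φ v) / (φ₀ v)) ((s.filter (fun w => φ₀ w ≠ 0)).image fun w => -(φ w) / (φ₀ w))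
      with hbad
    obtain ⟨ε, hε⟩ := Infinite.exists_notMem_finset bad
    refine ⟨φ + ε • φ₀, ?_⟩
    intro w hw
    have key : ∀ u : V, u ≠ 0 → φ₀ u ≠ 0 → ε ≠ -(φ u) / (φ₀ u) → (φ + ε • φ₀) u ≠ 0 := by
      intro u _ h0 hne
      simp only [LinearMap.add_apply, LinearMap.smul_apply, smul_eq_mul]
      intro hzero
      apply hne
      field_simp
      linarith
    rcases Finset.mem_insert.mp hw with rfl | hw'
    · refine key w hv hφ₀ (fun hcon => hε ?_)
      rw [hbad, hcon]
      exact Finset.mem_insert_self _ _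
    · by_cases h0 : φ₀ w = 0
      · simp only [LinearMap.add_apply, LinearMap.smul_apply, smul_eq_mul, h0, mul_zero, add_zero]
        exact hφ w hw'
      · refine key w (hs w hw) h0 ?_
        intro hcon
        apply hε
        rw [hbad, hcon]
        exact Finset.mem_insert_of_mem (Finset.mem_image_of_mem _ (Finset.mem_filter.mpr ⟨hw', h0⟩))


lemma submodule_gen {d : ℕ} (S : Submodule ℝ (Fin d → ℝ)) (h : Module.finrank ℝ S = 1) :
    ∃ v : Fin d → ℝ, v ≠ 0 ∧ S = Submodule.span ℝ {v} := by
  obtain ⟨⟨v, hvS⟩, hv0, hgen⟩ := finrank_eq_one_iff'.mp h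
  refine ⟨v, by simpa using hv0, le_antisymm ?_ ?_⟩
  · intro w hw
    obtain ⟨c, hc⟩ := hgen ⟨w, hw⟩
    have : c • v = w := congrArg Subtype.val hc
    rw [← this]
    exact Submodule.smul_mem _ _ (Submodule.mem_span_singleton_self v)
  · rw [Submodule.span_le, Set.singleton_subset_iff]
    exact hvS

section Fiberwise

variable {α β : Type*} [DecidableEq β] {M : Type*} [AddCommMonoid M]

lemma sum_comp_over (X : Finset α) (q : α → β) (ψ : β → M) (B : Finset β)
    (hB : X.image q ⊆ B) :
    ∑ x ∈ X, ψ (q x) = ∑ b ∈ B, (X.filter (fun x => q x = b)).card • ψ b := by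
  rw [Finset.sum_comp]
  refine Finset.sum_subset hB ?_
  intro b _ hb
  have : X.filter (fun x => q x = b) = ∅ := by
    rw [Finset.filter_eq_empty_iff]
    intro x hx hqx
    exact hb (Finset.mem_image.mpr ⟨x, hx, hqx⟩)
  rw [this]
  simp

lemma sum_congr_of_fibers (X Y : Finset α) (q : α → β) (φ : α → M)
    (hφ : ∀ x y, q x = q y → φ x = φ y)
    (h : ∀ b, (X.filter (fun x => q x = b)).card = (Y.filter (fun x => q x = b)).card) :
    ∑ x ∈ X, φ x = ∑ y ∈ Y, φ y := by
  classical
  have hX : ∑ x ∈ X, φ x = ∑ b ∈ (X ∪ Y).image q, ∑ x ∈ X.filter (fun x => q x = b), φ x := by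
    exact (Finset.sum_fiberwise_of_maps_to (fun x hx => Finset.mem_image_of_mem q
      (Finset.mem_union_left Y hx)) φ).symm
  have hY : ∑ y ∈ Y, φ y = ∑ b ∈ (X ∪ Y).image q, ∑ y ∈ Y.filter (fun x => q x = b), φ y := by
    exact (Finset.sum_fiberwise_of_maps_to (fun y hy => Finset.mem_image_of_mem q
      (Finset.mem_union_right X hy)) φ).symm
  rw [hX, hY]
  refine Finset.sum_congr rfl ?_
  intro b _
  by_cases hne : (X.filter (fun x => q x = b)).Nonempty
  · obtain ⟨x₀, hx₀⟩ := hne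
    have hqx₀ : q x₀ = b := (Finset.mem_filter.mp hx₀).2
    have h1 : ∑ x ∈ X.filter (fun x => q x = b), φ x
        = (X.filter (fun x => q x = b)).card • φ x₀ := by
      rw [← Finset.sum_const]
      refine Finset.sum_congr rfl ?_
      intro x hx
      exact hφ x x₀ ((Finset.mem_filter.mp hx).2.trans hqx₀.symm)
    have h2 : ∑ y ∈ Y.filter (fun x => q x = b), φ y
        = (Y.filter (fun x => q x = b)).card • φ x₀ := by
      rw [← Finset.sum_const]
      refine Finset.sum_congr rfl ?_
      intro y hy
      exact hφ y x₀ ((Finset.mem_filter.mp hy).2.trans hqx₀.symm)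
    rw [h1, h2, h b]
  · rw [Finset.not_nonempty_iff_eq_empty] at hne
    have hYe : Y.filter (fun x => q x = b) = ∅ := by
      have := h b
      rw [hne] at this
      simpa [Finset.card_eq_zero] using this.symm
    rw [hne, hYe]

end Fiberwise


lemma pow_decomp {ι : Type*} [Fintype ι] [DecidableEq ι] (c : ι → ℝ)
    (hinj : Set.InjOn c (Finset.univ : Finset ι)) (r : ℕ) (hr : r < Fintype.card ι)
    (a b : ℝ) :
    a ^ r = ∑ i, ((Lagrange.basis Finset.univ c i).eval 0) * (a - b * c i) ^ r := by
  have hdeg : ((C a - C b * X : ℝ[X]) ^ r).degree < (Finset.univ : Finset ι).card := by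
    refine lt_of_le_of_lt (Polynomial.degree_pow_le _ _) ?_
    have h1 : (C a - C b * X : ℝ[X]).degree ≤ 1 := by
      refine le_trans (Polynomial.degree_sub_le _ _) ?_
      simp only [max_le_iff]
      constructor
      · exact le_trans Polynomial.degree_C_le (by norm_num)
      · exact Polynomial.degree_C_mul_X_le b
    calc (r : ℕ) • (C a - C b * X : ℝ[X]).degree ≤ (r : ℕ) • (1 : WithBot ℕ) :=
          nsmul_le_nsmul_right h1 r
      _ = (r : WithBot ℕ) := by
          simp [nsmul_eq_mul]
      _ < ((Finset.univ : Finset ι).card : WithBot ℕ) := by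
          rw [Finset.card_univ]
          exact_mod_cast hr
  have hint := Lagrange.eq_interpolate hinj hdeg
  have := congrArg (Polynomial.eval 0) hint
  rw [Lagrange.interpolate_apply] at this
  rw [Polynomial.eval_finset_sum] at this
  simp only [Polynomial.eval_mul, Polynomial.eval_C, Polynomial.eval_pow, Polynomial.eval_sub,
    Polynomial.eval_mul, Polynomial.eval_X, mul_zero, sub_zero] at this
  rw [this]
  refine Finset.sum_congr rfl ?_
  intro i _
  ring


section WMS
variable {β : Type*}

lemma wms_card (s : Finset β) (f : β → ℕ) (w : β → ℝ) :
    Multiset.card (∑ b ∈ s, f b • ({w b} : Multiset ℝ)) = ∑ b ∈ s, f b := by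
  classical
  induction s using Finset.cons_induction with
  | empty => simp
  | cons a s ha ih =>
    rw [Finset.sum_cons, Finset.sum_cons, Multiset.card_add, ih]
    simp [Multiset.nsmul_singleton]

lemma wms_powsum (s : Finset β) (f : β → ℕ) (w : β → ℝ) (φ : ℝ → ℝ) :
    ((∑ b ∈ s, f b • ({w b} : Multiset ℝ)).map φ).sum = ∑ b ∈ s, (f b : ℝ) * φ (w b) := by
  classical
  induction s using Finset.cons_induction with
  | empty => simp
  | cons a s ha ih =>
    rw [Finset.sum_cons, Finset.sum_cons, Multiset.map_add, Multiset.sum_add, ih]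
    simp [Multiset.nsmul_singleton, Multiset.map_replicate, Multiset.sum_replicate,
      nsmul_eq_mul]

lemma wms_mem (s : Finset β) (f : β → ℕ) (w : β → ℝ) (x : ℝ) :
    x ∈ (∑ b ∈ s, f b • ({w b} : Multiset ℝ)) ↔ ∃ b ∈ s, f b ≠ 0 ∧ w b = x := by
  classical
  induction s using Finset.cons_induction with
  | empty => simp
  | cons a s ha ih =>
    rw [Finset.sum_cons, Multiset.mem_add, ih]
    constructor
    · rintro (hx | ⟨b, hb, hfb, hwb⟩)
      · rw [Multiset.nsmul_singleton] at hx
        have := Multiset.eq_of_mem_replicate hx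
        refine ⟨a, Finset.mem_cons_self a s, ?_, this.symm⟩
        intro h0
        rw [h0] at hx
        simp at hx
      · exact ⟨b, Finset.mem_cons_of_mem hb, hfb, hwb⟩
    · rintro ⟨b, hb, hfb, hwb⟩
      rcases Finset.mem_cons.mp hb with rfl | hb'
      · left
        rw [Multiset.nsmul_singleton]
        rw [← hwb]
        exact Multiset.mem_replicate.mpr ⟨hfb, rfl⟩
      · right
        exact ⟨b, hb', hfb, hwb⟩

end WMS

open scoped Classical

open Finset in
theorem key_bound {d : ℕ} (X₁ X₂ : Finset (Fin d → ℝ)) (hcard : X₁.card = X₂.card)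
    (Good : Finset (Submodule ℝ (Fin d → ℝ)))
    (hdimG : ∀ S ∈ Good, Module.finrank ℝ S = 1)
    (hgood : ∀ S ∈ Good, ∀ T : (Fin d → ℝ) ⧸ S,
      (X₁.filter (fun x => (Submodule.Quotient.mk x : (Fin d → ℝ) ⧸ S) = T)).card =
      (X₂.filter (fun x => (Submodule.Quotient.mk x : (Fin d → ℝ) ⧸ S) = T)).card)
    (S₀ : Submodule ℝ (Fin d → ℝ)) (hdim₀ : Module.finrank ℝ S₀ = 1) (hS₀ : S₀ ∉ Good)
    (hbad : ∃ T : (Fin d → ℝ) ⧸ S₀,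
      (X₁.filter (fun x => (Submodule.Quotient.mk x : (Fin d → ℝ) ⧸ S₀) = T)).card ≠
      (X₂.filter (fun x => (Submodule.Quotient.mk x : (Fin d → ℝ) ⧸ S₀) = T)).card) :
    2 * Good.card ≤ ∑ T ∈ (X₁ ∪ X₂).image
        (fun x => (Submodule.Quotient.mk x : (Fin d → ℝ) ⧸ S₀)),
      (((X₁.filter (fun x => (Submodule.Quotient.mk x : (Fin d → ℝ) ⧸ S₀) = T)).card : ℤ)
        - ((X₂.filter (fun x => (Submodule.Quotient.mk x : (Fin d → ℝ) ⧸ S₀) = T)).card : ℤ)).natAbs := by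
  by_contra hlt
  push_neg at hlt
  have hg : 0 < Good.card := by
    by_contra hg0
    push_neg at hg0
    interval_cases h : Good.card <;> omega
  set Z : Finset (Fin d → ℝ) := X₁ ∪ X₂ with hZdef
  set ι := {S : Submodule ℝ (Fin d → ℝ) // S ∈ Good} with hι
  have hcardι : Fintype.card ι = Good.card := Fintype.card_coe Good
  -- generators for good lines
  have hgen : ∀ i : ι, ∃ w : Fin d → ℝ, w ≠ 0 ∧ (i.1 : Submodule ℝ (Fin d → ℝ)) = Submodule.span ℝ {w} :=
    fun i => submodule_gen i.1 (hdimG i.1 i.2)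
  choose v hv0 hvspan using hgen
  have hinjsub : ∀ i j : ι, (i.1 : Submodule ℝ (Fin d → ℝ)) = j.1 → i = j := fun i j hij => Subtype.ext hij
  have hvspan_le : ∀ (i : ι) (S : Submodule ℝ (Fin d → ℝ)), Module.finrank ℝ S = 1 →
      v i ∈ S → (i.1 : Submodule ℝ (Fin d → ℝ)) = S := by
    intro i S hdimS hvi
    have hle : (i.1 : Submodule ℝ (Fin d → ℝ)) ≤ S := by
      rw [hvspan i]
      exact Submodule.span_le.mpr (Set.singleton_subset_iff.mpr hvi)
    exact Submodule.eq_of_le_of_finrank_eq hle (by rw [hdimG _ i.2, hdimS])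
  have hvnotS₀ : ∀ i : ι, (Submodule.Quotient.mk (v i) : (Fin d → ℝ) ⧸ S₀) ≠ 0 := by
    intro i hzero
    rw [Submodule.Quotient.mk_eq_zero] at hzero
    exact hS₀ ((hvspan_le i S₀ hdim₀ hzero) ▸ i.2)
  -- the functional lam on the quotient
  set VQ : Finset ((Fin d → ℝ) ⧸ S₀) :=
    (Finset.univ.image fun i : ι => (Submodule.Quotient.mk (v i) : (Fin d → ℝ) ⧸ S₀)) ∪
    (((Z ×ˢ Z).filter (fun p => (Submodule.Quotient.mk p.1 : (Fin d → ℝ) ⧸ S₀) ≠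
        Submodule.Quotient.mk p.2)).image
      (fun p => (Submodule.Quotient.mk p.1 : (Fin d → ℝ) ⧸ S₀) - Submodule.Quotient.mk p.2))
    with hVQ
  obtain ⟨lam, hlam⟩ : ∃ φ : Module.Dual ℝ ((Fin d → ℝ) ⧸ S₀), ∀ u ∈ VQ, φ u ≠ 0 := by
    apply exists_dual_ne_zero
    intro u hu
    rcases Finset.mem_union.mp hu with hu' | hu'
    · obtain ⟨i, _, rfl⟩ := Finset.mem_image.mp hu'
      exact hvnotS₀ i
    · obtain ⟨p, hp, rfl⟩ := Finset.mem_image.mp hu'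
      exact sub_ne_zero_of_ne (Finset.mem_filter.mp hp).2
  have hμv : ∀ i : ι, lam (Submodule.Quotient.mk (v i)) ≠ 0 := by
    intro i
    exact hlam _ (Finset.mem_union_left _ (Finset.mem_image_of_mem _ (Finset.mem_univ i)))
  have hsep : ∀ x ∈ Z, ∀ y ∈ Z,
      (Submodule.Quotient.mk x : (Fin d → ℝ) ⧸ S₀) ≠ Submodule.Quotient.mk y →
      lam (Submodule.Quotient.mk x) ≠ lam (Submodule.Quotient.mk y) := by
    intro x hx y hy hne
    have hmem : ((Submodule.Quotient.mk x : (Fin d → ℝ) ⧸ S₀) - Submodule.Quotient.mk y) ∈ VQ := by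
      refine Finset.mem_union_right _ (Finset.mem_image.mpr ⟨(x, y), ?_, rfl⟩)
      exact Finset.mem_filter.mpr ⟨Finset.mem_product.mpr ⟨hx, hy⟩, hne⟩
    have := hlam _ hmem
    rw [map_sub] at this
    exact sub_ne_zero.mp this
  -- the second functional nu
  set W : Finset (Fin d → ℝ) :=
    (Finset.univ.image v) ∪
    (((Finset.univ ×ˢ Finset.univ).filter (fun p : ι × ι => p.1 ≠ p.2)).image
      (fun p => lam (Submodule.Quotient.mk (v p.1)) • v p.2
        - lam (Submodule.Quotient.mk (v p.2)) • v p.1)) with hW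
  obtain ⟨nu, hnu⟩ : ∃ φ : Module.Dual ℝ (Fin d → ℝ), ∀ u ∈ W, φ u ≠ 0 := by
    apply exists_dual_ne_zero
    intro u hu
    rcases Finset.mem_union.mp hu with hu' | hu'
    · obtain ⟨i, _, rfl⟩ := Finset.mem_image.mp hu'
      exact hv0 i
    · obtain ⟨p, hp, rfl⟩ := Finset.mem_image.mp hu'
      have hpne : p.1 ≠ p.2 := (Finset.mem_filter.mp hp).2
      intro hzero
      rw [sub_eq_zero] at hzero
      -- v p.2 ∈ span {v p.1}
      have : v p.2 = (lam (Submodule.Quotient.mk (v p.1)))⁻¹ •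
          (lam (Submodule.Quotient.mk (v p.2)) • v p.1) := by
        rw [← hzero, smul_smul, inv_mul_cancel₀ (hμv p.1), one_smul]
      have hmem : v p.2 ∈ (p.1.1 : Submodule ℝ (Fin d → ℝ)) := by
        rw [this, hvspan p.1]
        exact Submodule.smul_mem _ _ (Submodule.smul_mem _ _ (Submodule.mem_span_singleton_self _))
      have : (p.2.1 : Submodule ℝ (Fin d → ℝ)) = p.1.1 :=
        hvspan_le p.2 p.1.1 (hdimG _ p.1.2) hmem
      exact hpne (hinjsub _ _ this.symm)
  have hνv : ∀ i : ι, nu (v i) ≠ 0 := by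
    intro i
    exact hnu _ (Finset.mem_union_left _ (Finset.mem_image_of_mem _ (Finset.mem_univ i)))
  -- the nodes
  set c : ι → ℝ := fun i => lam (Submodule.Quotient.mk (v i)) / nu (v i) with hc
  have hcinj : Set.InjOn c (Finset.univ : Finset ι) := by
    intro i _ j _ hij
    by_contra hne
    have hcross : lam (Submodule.Quotient.mk (v i)) * nu (v j)
        = lam (Submodule.Quotient.mk (v j)) * nu (v i) := by
      have := (div_eq_div_iff (hνv i) (hνv j)).mp hij
      linarith
    have hmem : (lam (Submodule.Quotient.mk (v i)) • v j
        - lam (Submodule.Quotient.mk (v j)) • v i) ∈ W := by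
      refine Finset.mem_union_right _ (Finset.mem_image.mpr ⟨(i, j), ?_, rfl⟩)
      exact Finset.mem_filter.mpr ⟨Finset.mem_product.mpr ⟨Finset.mem_univ _, Finset.mem_univ _⟩, hne⟩
    have := hnu _ hmem
    rw [map_sub, map_smul, map_smul, smul_eq_mul, smul_eq_mul] at this
    exact this (by linarith)
  -- moment identity
  have hmoment : ∀ r : ℕ, r < Good.card →
      ∑ x ∈ X₁, (lam (Submodule.Quotient.mk x)) ^ r
        = ∑ x ∈ X₂, (lam (Submodule.Quotient.mk x)) ^ r := by
    intro r hr
    have hdec : ∀ x : Fin d → ℝ, (lam (Submodule.Quotient.mk x)) ^ r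
        = ∑ i : ι, ((Lagrange.basis Finset.univ c i).eval 0)
            * (lam (Submodule.Quotient.mk x) - nu x * c i) ^ r := by
      intro x
      exact pow_decomp c hcinj r (by rw [hcardι]; exact hr) _ _
    rw [Finset.sum_congr rfl (fun x _ => hdec x), Finset.sum_congr rfl (fun x _ => hdec x),
      Finset.sum_comm, Finset.sum_comm (s := X₂)]
    refine Finset.sum_congr rfl ?_
    intro i _
    refine sum_congr_of_fibers X₁ X₂
      (fun x => (Submodule.Quotient.mk x : (Fin d → ℝ) ⧸ i.1))
      (fun x => ((Lagrange.basis Finset.univ c i).eval 0)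
        * (lam (Submodule.Quotient.mk x) - nu x * c i) ^ r) ?_ (hgood i.1 i.2)
    intro x y hxy
    rw [Submodule.Quotient.eq] at hxy
    rw [hvspan i, Submodule.mem_span_singleton] at hxy
    obtain ⟨t, ht⟩ := hxy
    have hlamdiff : lam (Submodule.Quotient.mk x) - lam (Submodule.Quotient.mk y)
        = t * lam (Submodule.Quotient.mk (v i)) := by
      rw [← map_sub, ← Submodule.Quotient.mk_sub, ← ht, Submodule.Quotient.mk_smul,
        map_smul, smul_eq_mul]
    have hnudiff : nu x - nu y = t * nu (v i) := by
      rw [← map_sub, ← ht, map_smul, smul_eq_mul]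
    have hinner : lam (Submodule.Quotient.mk x) - nu x * c i
        = lam (Submodule.Quotient.mk y) - nu y * c i := by
      have hci : c i * nu (v i) = lam (Submodule.Quotient.mk (v i)) := by
        rw [hc]
        rw [div_mul_cancel₀ _ (hνv i)]
      have h2 : (nu x - nu y) * c i = lam (Submodule.Quotient.mk x)
          - lam (Submodule.Quotient.mk y) := by
        rw [hnudiff, hlamdiff, ← hci]
        ring
      linarith [h2]
    rw [hinner]
  -- grouping along S₀
  set 𝒯 : Finset ((Fin d → ℝ) ⧸ S₀) :=
    Z.image (fun x => (Submodule.Quotient.mk x : (Fin d → ℝ) ⧸ S₀)) with h𝒯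
  have hmomT : ∀ r : ℕ, r < Good.card →
      ∑ T ∈ 𝒯, (((((X₁.filter (fun x => (Submodule.Quotient.mk x : (Fin d → ℝ) ⧸ S₀) = T)).card : ℤ) - ((X₂.filter (fun x => (Submodule.Quotient.mk x : (Fin d → ℝ) ⧸ S₀) = T)).card : ℤ)) : ℤ) : ℝ) * lam T ^ r = 0 := by
    intro r hr
    have h1 := sum_comp_over X₁ (fun x => (Submodule.Quotient.mk x : (Fin d → ℝ) ⧸ S₀)) (fun T => lam T ^ r) 𝒯
      (Finset.image_subset_image Finset.subset_union_left)
    have h2 := sum_comp_over X₂ (fun x => (Submodule.Quotient.mk x : (Fin d → ℝ) ⧸ S₀)) (fun T => lam T ^ r) 𝒯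
      (Finset.image_subset_image Finset.subset_union_right)
    have h3 := hmoment r hr
    rw [h1, h2] at h3
    have h4 : ∑ T ∈ 𝒯, (((((X₁.filter (fun x => (Submodule.Quotient.mk x : (Fin d → ℝ) ⧸ S₀) = T)).card : ℤ) - ((X₂.filter (fun x => (Submodule.Quotient.mk x : (Fin d → ℝ) ⧸ S₀) = T)).card : ℤ)) : ℤ) : ℝ) * lam T ^ r
        = (∑ T ∈ 𝒯, (X₁.filter (fun x => (Submodule.Quotient.mk x : (Fin d → ℝ) ⧸ S₀) = T)).card • lam T ^ r)
          - ∑ T ∈ 𝒯, (X₂.filter (fun x => (Submodule.Quotient.mk x : (Fin d → ℝ) ⧸ S₀) = T)).card • lam T ^ r := by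
      rw [← Finset.sum_sub_distrib]
      refine Finset.sum_congr rfl fun T _ => ?_
      push_cast
      ring
    rw [h4, h3, sub_self]
  have hsum0 : ∑ T ∈ 𝒯, (((X₁.filter (fun x => (Submodule.Quotient.mk x : (Fin d → ℝ) ⧸ S₀) = T)).card : ℤ) - ((X₂.filter (fun x => (Submodule.Quotient.mk x : (Fin d → ℝ) ⧸ S₀) = T)).card : ℤ)) = 0 := by
    have e1 := sum_comp_over X₁ (fun x => (Submodule.Quotient.mk x : (Fin d → ℝ) ⧸ S₀)) (fun _ => (1 : ℤ)) 𝒯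
      (Finset.image_subset_image Finset.subset_union_left)
    have e2 := sum_comp_over X₂ (fun x => (Submodule.Quotient.mk x : (Fin d → ℝ) ⧸ S₀)) (fun _ => (1 : ℤ)) 𝒯
      (Finset.image_subset_image Finset.subset_union_right)
    simp only [smul_eq_mul, mul_one, Finset.sum_const] at e1 e2
    rw [Finset.sum_sub_distrib]
    have e1' : ∑ T ∈ 𝒯, ((X₁.filter (fun x => (Submodule.Quotient.mk x : (Fin d → ℝ) ⧸ S₀) = T)).card : ℤ) = (X₁.card : ℤ) := by
      simpa using e1.symm
    have e2' : ∑ T ∈ 𝒯, ((X₂.filter (fun x => (Submodule.Quotient.mk x : (Fin d → ℝ) ⧸ S₀) = T)).card : ℤ) = (X₂.card : ℤ) := by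
      simpa using e2.symm
    rw [e1', e2', hcard]
    ring
  obtain ⟨T₀, hT₀⟩ := hbad
  have hT₀mem : T₀ ∈ 𝒯 := by
    have : (X₁.filter (fun x => (Submodule.Quotient.mk x : (Fin d → ℝ) ⧸ S₀) = T₀)).card ≠ 0 ∨
        (X₂.filter (fun x => (Submodule.Quotient.mk x : (Fin d → ℝ) ⧸ S₀) = T₀)).card ≠ 0 := by omega
    rcases this with h' | h'
    · obtain ⟨x, hx⟩ := Finset.card_ne_zero.mp h'
      have hx' := Finset.mem_filter.mp hx
      exact Finset.mem_image.mpr ⟨x, Finset.mem_union_left _ hx'.1, hx'.2⟩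
    · obtain ⟨x, hx⟩ := Finset.card_ne_zero.mp h'
      have hx' := Finset.mem_filter.mp hx
      exact Finset.mem_image.mpr ⟨x, Finset.mem_union_right _ hx'.1, hx'.2⟩
  have hT₀ne : (((X₁.filter (fun x => (Submodule.Quotient.mk x : (Fin d → ℝ) ⧸ S₀) = T₀)).card : ℤ) - ((X₂.filter (fun x => (Submodule.Quotient.mk x : (Fin d → ℝ) ⧸ S₀) = T₀)).card : ℤ)) ≠ 0 := by
    simp only [ne_eq, sub_eq_zero]
    exact_mod_cast hT₀
  -- the two multisets
  set A : Multiset ℝ := ∑ T ∈ 𝒯, ((((X₁.filter (fun x => (Submodule.Quotient.mk x : (Fin d → ℝ) ⧸ S₀) = T)).card : ℤ) - ((X₂.filter (fun x => (Submodule.Quotient.mk x : (Fin d → ℝ) ⧸ S₀) = T)).card : ℤ))).toNat • ({lam T} : Multiset ℝ) with hA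
  set B : Multiset ℝ := ∑ T ∈ 𝒯, (-((((X₁.filter (fun x => (Submodule.Quotient.mk x : (Fin d → ℝ) ⧸ S₀) = T)).card : ℤ) - ((X₂.filter (fun x => (Submodule.Quotient.mk x : (Fin d → ℝ) ⧸ S₀) = T)).card : ℤ)))).toNat • ({lam T} : Multiset ℝ) with hB
  have hcA : Multiset.card A = ∑ T ∈ 𝒯, ((((X₁.filter (fun x => (Submodule.Quotient.mk x : (Fin d → ℝ) ⧸ S₀) = T)).card : ℤ) - ((X₂.filter (fun x => (Submodule.Quotient.mk x : (Fin d → ℝ) ⧸ S₀) = T)).card : ℤ))).toNat := wms_card _ _ _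
  have hcB : Multiset.card B = ∑ T ∈ 𝒯, (-((((X₁.filter (fun x => (Submodule.Quotient.mk x : (Fin d → ℝ) ⧸ S₀) = T)).card : ℤ) - ((X₂.filter (fun x => (Submodule.Quotient.mk x : (Fin d → ℝ) ⧸ S₀) = T)).card : ℤ)))).toNat := wms_card _ _ _
  have hcAB : Multiset.card A = Multiset.card B := by
    rw [hcA, hcB]
    have key : (∑ T ∈ 𝒯, (((((X₁.filter (fun x => (Submodule.Quotient.mk x : (Fin d → ℝ) ⧸ S₀) = T)).card : ℤ) - ((X₂.filter (fun x => (Submodule.Quotient.mk x : (Fin d → ℝ) ⧸ S₀) = T)).card : ℤ))).toNat : ℤ))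
        - ∑ T ∈ 𝒯, ((-((((X₁.filter (fun x => (Submodule.Quotient.mk x : (Fin d → ℝ) ⧸ S₀) = T)).card : ℤ) - ((X₂.filter (fun x => (Submodule.Quotient.mk x : (Fin d → ℝ) ⧸ S₀) = T)).card : ℤ)))).toNat : ℤ) = 0 := by
      rw [← Finset.sum_sub_distrib]
      rw [Finset.sum_congr rfl (fun T _ => (by omega :
        ((((((X₁.filter (fun x => (Submodule.Quotient.mk x : (Fin d → ℝ) ⧸ S₀) = T)).card : ℤ) - ((X₂.filter (fun x => (Submodule.Quotient.mk x : (Fin d → ℝ) ⧸ S₀) = T)).card : ℤ))).toNat : ℤ) - ((-((((X₁.filter (fun x => (Submodule.Quotient.mk x : (Fin d → ℝ) ⧸ S₀) = T)).card : ℤ) - ((X₂.filter (fun x => (Submodule.Quotient.mk x : (Fin d → ℝ) ⧸ S₀) = T)).card : ℤ)))).toNat : ℤ)) = (((X₁.filter (fun x => (Submodule.Quotient.mk x : (Fin d → ℝ) ⧸ S₀) = T)).card : ℤ) - ((X₂.filter (fun x => (Submodule.Quotient.mk x : (Fin d → ℝ) ⧸ S₀) = T)).card : ℤ))))]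
      exact hsum0
    have key2 : ((∑ T ∈ 𝒯, ((((X₁.filter (fun x => (Submodule.Quotient.mk x : (Fin d → ℝ) ⧸ S₀) = T)).card : ℤ) - ((X₂.filter (fun x => (Submodule.Quotient.mk x : (Fin d → ℝ) ⧸ S₀) = T)).card : ℤ))).toNat : ℕ) : ℤ)
        = ((∑ T ∈ 𝒯, (-((((X₁.filter (fun x => (Submodule.Quotient.mk x : (Fin d → ℝ) ⧸ S₀) = T)).card : ℤ) - ((X₂.filter (fun x => (Submodule.Quotient.mk x : (Fin d → ℝ) ⧸ S₀) = T)).card : ℤ)))).toNat : ℕ) : ℤ) := by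
      push_cast
      push_cast at key
      linarith
    exact_mod_cast key2
  have hNlt : Multiset.card A < Good.card := by
    have h7 : ∑ T ∈ 𝒯, ((((X₁.filter (fun x => (Submodule.Quotient.mk x : (Fin d → ℝ) ⧸ S₀) = T)).card : ℤ) - ((X₂.filter (fun x => (Submodule.Quotient.mk x : (Fin d → ℝ) ⧸ S₀) = T)).card : ℤ))).natAbs = Multiset.card A + Multiset.card B := by
      rw [hcA, hcB, ← Finset.sum_add_distrib]
      refine Finset.sum_congr rfl fun T _ => ?_
      omega
    omega
  have hpow : ∀ r, 1 ≤ r → r ≤ Multiset.card A →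
      (A.map (· ^ r)).sum = (B.map (· ^ r)).sum := by
    intro r h1r hrA
    have hpA : (A.map (· ^ r)).sum = ∑ T ∈ 𝒯, ((((((X₁.filter (fun x => (Submodule.Quotient.mk x : (Fin d → ℝ) ⧸ S₀) = T)).card : ℤ) - ((X₂.filter (fun x => (Submodule.Quotient.mk x : (Fin d → ℝ) ⧸ S₀) = T)).card : ℤ))).toNat : ℝ)) * lam T ^ r :=
      wms_powsum _ _ _ _
    have hpB : (B.map (· ^ r)).sum = ∑ T ∈ 𝒯, (((-((((X₁.filter (fun x => (Submodule.Quotient.mk x : (Fin d → ℝ) ⧸ S₀) = T)).card : ℤ) - ((X₂.filter (fun x => (Submodule.Quotient.mk x : (Fin d → ℝ) ⧸ S₀) = T)).card : ℤ)))).toNat : ℝ)) * lam T ^ r :=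
      wms_powsum _ _ _ _
    have hdiff : ∑ T ∈ 𝒯, ((((((X₁.filter (fun x => (Submodule.Quotient.mk x : (Fin d → ℝ) ⧸ S₀) = T)).card : ℤ) - ((X₂.filter (fun x => (Submodule.Quotient.mk x : (Fin d → ℝ) ⧸ S₀) = T)).card : ℤ))).toNat : ℝ)) * lam T ^ r
        - ∑ T ∈ 𝒯, (((-((((X₁.filter (fun x => (Submodule.Quotient.mk x : (Fin d → ℝ) ⧸ S₀) = T)).card : ℤ) - ((X₂.filter (fun x => (Submodule.Quotient.mk x : (Fin d → ℝ) ⧸ S₀) = T)).card : ℤ)))).toNat : ℝ)) * lam T ^ r = 0 := by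
      rw [← Finset.sum_sub_distrib]
      have hcongr : ∀ T ∈ 𝒯, ((((((X₁.filter (fun x => (Submodule.Quotient.mk x : (Fin d → ℝ) ⧸ S₀) = T)).card : ℤ) - ((X₂.filter (fun x => (Submodule.Quotient.mk x : (Fin d → ℝ) ⧸ S₀) = T)).card : ℤ))).toNat : ℝ)) * lam T ^ r
          - (((-((((X₁.filter (fun x => (Submodule.Quotient.mk x : (Fin d → ℝ) ⧸ S₀) = T)).card : ℤ) - ((X₂.filter (fun x => (Submodule.Quotient.mk x : (Fin d → ℝ) ⧸ S₀) = T)).card : ℤ)))).toNat : ℝ)) * lam T ^ r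
          = (((((X₁.filter (fun x => (Submodule.Quotient.mk x : (Fin d → ℝ) ⧸ S₀) = T)).card : ℤ) - ((X₂.filter (fun x => (Submodule.Quotient.mk x : (Fin d → ℝ) ⧸ S₀) = T)).card : ℤ)) : ℤ) : ℝ) * lam T ^ r := by
        intro T _
        have : ((((((X₁.filter (fun x => (Submodule.Quotient.mk x : (Fin d → ℝ) ⧸ S₀) = T)).card : ℤ) - ((X₂.filter (fun x => (Submodule.Quotient.mk x : (Fin d → ℝ) ⧸ S₀) = T)).card : ℤ))).toNat : ℤ) : ℝ) - (((-((((X₁.filter (fun x => (Submodule.Quotient.mk x : (Fin d → ℝ) ⧸ S₀) = T)).card : ℤ) - ((X₂.filter (fun x => (Submodule.Quotient.mk x : (Fin d → ℝ) ⧸ S₀) = T)).card : ℤ)))).toNat : ℤ) : ℝ)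
            = (((((X₁.filter (fun x => (Submodule.Quotient.mk x : (Fin d → ℝ) ⧸ S₀) = T)).card : ℤ) - ((X₂.filter (fun x => (Submodule.Quotient.mk x : (Fin d → ℝ) ⧸ S₀) = T)).card : ℤ)) : ℤ) : ℝ) := by
          have : (((((X₁.filter (fun x => (Submodule.Quotient.mk x : (Fin d → ℝ) ⧸ S₀) = T)).card : ℤ) - ((X₂.filter (fun x => (Submodule.Quotient.mk x : (Fin d → ℝ) ⧸ S₀) = T)).card : ℤ))).toNat : ℤ) - ((-((((X₁.filter (fun x => (Submodule.Quotient.mk x : (Fin d → ℝ) ⧸ S₀) = T)).card : ℤ) - ((X₂.filter (fun x => (Submodule.Quotient.mk x : (Fin d → ℝ) ⧸ S₀) = T)).card : ℤ)))).toNat : ℤ) = (((X₁.filter (fun x => (Submodule.Quotient.mk x : (Fin d → ℝ) ⧸ S₀) = T)).card : ℤ) - ((X₂.filter (fun x => (Submodule.Quotient.mk x : (Fin d → ℝ) ⧸ S₀) = T)).card : ℤ)) := by omega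
          exact_mod_cast this
        push_cast at this ⊢
        rw [← this]
        ring
      rw [Finset.sum_congr rfl hcongr]
      exact hmomT r (lt_of_le_of_lt hrA hNlt)
    rw [hpA, hpB]
    linarith
  have hABeq : A = B := multiset_eq_of_power_sums A B hcAB hpow
  have hinjT : ∀ T ∈ 𝒯, ∀ T' ∈ 𝒯, lam T = lam T' → T = T' := by
    intro T hT T' hT' hEq
    by_contra hne
    obtain ⟨x, hx, rfl⟩ := Finset.mem_image.mp hT
    obtain ⟨y, hy, rfl⟩ := Finset.mem_image.mp hT'
    exact hsep x hx y hy hne hEq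
  rcases lt_trichotomy ((((X₁.filter (fun x => (Submodule.Quotient.mk x : (Fin d → ℝ) ⧸ S₀) = T₀)).card : ℤ) - ((X₂.filter (fun x => (Submodule.Quotient.mk x : (Fin d → ℝ) ⧸ S₀) = T₀)).card : ℤ))) 0 with hneg | h0 | hpos
  · have hmemB : lam T₀ ∈ B := by
      rw [hB]
      exact (wms_mem _ _ _ _).mpr ⟨T₀, hT₀mem, by omega, rfl⟩
    rw [← hABeq] at hmemB
    rw [hA] at hmemB
    obtain ⟨T', hT', hfT', hwT'⟩ := (wms_mem _ _ _ _).mp hmemB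
    have hTT : T' = T₀ := hinjT T' hT' T₀ hT₀mem hwT'
    rw [hTT] at hfT'
    omega
  · exact hT₀ne h0
  · have hmemA : lam T₀ ∈ A := by
      rw [hA]
      exact (wms_mem _ _ _ _).mpr ⟨T₀, hT₀mem, by omega, rfl⟩
    rw [hABeq] at hmemA
    rw [hB] at hmemA
    obtain ⟨T', hT', hfT', hwT'⟩ := (wms_mem _ _ _ _).mp hmemA
    have hTT : T' = T₀ := hinjT T' hT' T₀ hT₀mem hwT'
    rw [hTT] at hfT'
    omega



open Finset in
theorem stability_jump
    (d m : ℕ) (𝒮 : Set (Submodule ℝ (Fin d → ℝ))) (hfin : 𝒮.Finite)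
    (hdim : ∀ S ∈ 𝒮, Module.finrank ℝ S = 1) (hcard : 𝒮.ncard = m)
    (F₁ F₂ : Set (Fin d → ℝ)) (h₁ : F₁.Finite) (h₂ : F₂.Finite)
    (hc : F₁.ncard = F₂.ncard)
    (h : xrayDiff 𝒮 F₁ F₂ < 2 * (m - 1)) :
    TomEq 𝒮 F₁ F₂ := by
  by_contra hTom
  rw [TomEq] at hTom
  push_neg at hTom
  obtain ⟨S₀, hS₀mem, hS₀bad⟩ := hTom
  set X₁ : Finset (Fin d → ℝ) := h₁.toFinset with hX₁
  set X₂ : Finset (Fin d → ℝ) := h₂.toFinset with hX₂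
  set Z : Finset (Fin d → ℝ) := X₁ ∪ X₂ with hZ
  -- bridge between set ncards and finset filter cards
  have hbridge : ∀ (F : Set (Fin d → ℝ)) (hF : F.Finite) (S : Submodule ℝ (Fin d → ℝ))
      (T : (Fin d → ℝ) ⧸ S),
      (F ∩ fiber S T).ncard =
        (hF.toFinset.filter (fun x => (Submodule.Quotient.mk x : (Fin d → ℝ) ⧸ S) = T)).card := by
    intro F hF S T
    rw [← Set.ncard_coe_finset]
    congr 1
    ext x
    simp [fiber]
  have hcards : X₁.card = X₂.card := by
    rw [hX₁, hX₂, ← Set.ncard_eq_toFinset_card F₁ h₁, ← Set.ncard_eq_toFinset_card F₂ h₂]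
    exact hc
  -- the inner sum as a finite sum
  have hΔ : ∀ S : Submodule ℝ (Fin d → ℝ),
      (∑ᶠ T : (Fin d → ℝ) ⧸ S,
        (((F₁ ∩ fiber S T).ncard : ℤ) - ((F₂ ∩ fiber S T).ncard : ℤ)).natAbs) =
      ∑ T ∈ Z.image (fun x => (Submodule.Quotient.mk x : (Fin d → ℝ) ⧸ S)),
        (((X₁.filter (fun x => (Submodule.Quotient.mk x : (Fin d → ℝ) ⧸ S) = T)).card : ℤ)
          - ((X₂.filter (fun x => (Submodule.Quotient.mk x : (Fin d → ℝ) ⧸ S) = T)).card : ℤ)).natAbs := by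
    intro S
    rw [finsum_eq_sum_of_support_subset]
    · refine Finset.sum_congr rfl ?_
      intro T _
      rw [hbridge F₁ h₁ S T, hbridge F₂ h₂ S T]
    · intro T hT
      simp only [Function.mem_support] at hT
      have : (F₁ ∩ fiber S T).ncard ≠ 0 ∨ (F₂ ∩ fiber S T).ncard ≠ 0 := by
        by_contra hcon
        push_neg at hcon
        rw [hcon.1, hcon.2] at hT
        simp at hT
      have hex : ∃ x ∈ Z, (Submodule.Quotient.mk x : (Fin d → ℝ) ⧸ S) = T := by
        rcases this with h' | h'
        · rw [hbridge F₁ h₁ S T] at h'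
          obtain ⟨x, hx⟩ := Finset.card_ne_zero.mp h'
          have hx' := Finset.mem_filter.mp hx
          exact ⟨x, Finset.mem_union_left _ hx'.1, hx'.2⟩
        · rw [hbridge F₂ h₂ S T] at h'
          obtain ⟨x, hx⟩ := Finset.card_ne_zero.mp h'
          have hx' := Finset.mem_filter.mp hx
          exact ⟨x, Finset.mem_union_right _ hx'.1, hx'.2⟩
      obtain ⟨x, hxZ, hxT⟩ := hex
      exact Finset.mem_coe.mpr (Finset.mem_image.mpr ⟨x, hxZ, hxT⟩)
  -- the per-direction zero-sum identity
  have hsum0 : ∀ S : Submodule ℝ (Fin d → ℝ),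
      (∑ T ∈ Z.image (fun x => (Submodule.Quotient.mk x : (Fin d → ℝ) ⧸ S)),
        (((X₁.filter (fun x => (Submodule.Quotient.mk x : (Fin d → ℝ) ⧸ S) = T)).card : ℤ)
          - ((X₂.filter (fun x => (Submodule.Quotient.mk x : (Fin d → ℝ) ⧸ S) = T)).card : ℤ))) = 0 := by
    intro S
    have e1 : ∑ T ∈ Z.image (fun x => (Submodule.Quotient.mk x : (Fin d → ℝ) ⧸ S)), ((X₁.filter (fun x => (Submodule.Quotient.mk x : (Fin d → ℝ) ⧸ S) = T)).card : ℤ)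
        = (X₁.card : ℤ) := by
      have := sum_comp_over X₁ (fun x => (Submodule.Quotient.mk x : (Fin d → ℝ) ⧸ S)) (fun _ => (1 : ℤ)) (Z.image (fun x => (Submodule.Quotient.mk x : (Fin d → ℝ) ⧸ S)))
        (Finset.image_subset_image (Finset.subset_union_left))
      simpa using this.symm
    have e2 : ∑ T ∈ Z.image (fun x => (Submodule.Quotient.mk x : (Fin d → ℝ) ⧸ S)), ((X₂.filter (fun x => (Submodule.Quotient.mk x : (Fin d → ℝ) ⧸ S) = T)).card : ℤ)
        = (X₂.card : ℤ) := by
      have := sum_comp_over X₂ (fun x => (Submodule.Quotient.mk x : (Fin d → ℝ) ⧸ S)) (fun _ => (1 : ℤ)) (Z.image (fun x => (Submodule.Quotient.mk x : (Fin d → ℝ) ⧸ S)))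
        (Finset.image_subset_image (Finset.subset_union_right))
      simpa using this.symm
    rw [Finset.sum_sub_distrib, e1, e2, hcards]
    ring
  -- bad directions contribute at least 2
  have htwo : ∀ S : Submodule ℝ (Fin d → ℝ), ¬ XrayEq S F₁ F₂ →
      2 ≤ ∑ T ∈ Z.image (fun x => (Submodule.Quotient.mk x : (Fin d → ℝ) ⧸ S)),
        (((X₁.filter (fun x => (Submodule.Quotient.mk x : (Fin d → ℝ) ⧸ S) = T)).card : ℤ)
          - ((X₂.filter (fun x => (Submodule.Quotient.mk x : (Fin d → ℝ) ⧸ S) = T)).card : ℤ)).natAbs := by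
    intro S hSbad
    rw [XrayEq] at hSbad
    push_neg at hSbad
    obtain ⟨T₀, hT₀⟩ := hSbad
    rw [hbridge F₁ h₁ S T₀, hbridge F₂ h₂ S T₀, ← hX₁, ← hX₂] at hT₀
    set nn : ((Fin d → ℝ) ⧸ S) → ℤ := fun T =>
      (((X₁.filter (fun x => (Submodule.Quotient.mk x : (Fin d → ℝ) ⧸ S) = T)).card : ℤ)
        - ((X₂.filter (fun x => (Submodule.Quotient.mk x : (Fin d → ℝ) ⧸ S) = T)).card : ℤ)) with hnn
    have hT₀ne : nn T₀ ≠ 0 := by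
      rw [hnn]
      simp only [ne_eq, sub_eq_zero]
      exact_mod_cast hT₀
    have hT₀mem : T₀ ∈ Z.image (fun x => (Submodule.Quotient.mk x : (Fin d → ℝ) ⧸ S)) := by
      have : (X₁.filter (fun x => (Submodule.Quotient.mk x : (Fin d → ℝ) ⧸ S) = T₀)).card ≠ 0 ∨
          (X₂.filter (fun x => (Submodule.Quotient.mk x : (Fin d → ℝ) ⧸ S) = T₀)).card ≠ 0 := by omega
      rcases this with h' | h'
      · obtain ⟨x, hx⟩ := Finset.card_ne_zero.mp h'
        have hx' := Finset.mem_filter.mp hx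
        exact Finset.mem_image.mpr ⟨x, Finset.mem_union_left _ hx'.1, hx'.2⟩
      · obtain ⟨x, hx⟩ := Finset.card_ne_zero.mp h'
        have hx' := Finset.mem_filter.mp hx
        exact Finset.mem_image.mpr ⟨x, Finset.mem_union_right _ hx'.1, hx'.2⟩
    have hsplit := (Finset.add_sum_erase _ nn hT₀mem).symm
    rw [hsum0 S] at hsplit
    -- sum over erase equals -nn T₀
    have herase : ∑ T ∈ (Z.image (fun x => (Submodule.Quotient.mk x : (Fin d → ℝ) ⧸ S))).erase T₀, nn T = - nn T₀ := by linarith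
    have habs : (1 : ℤ) ≤ |nn T₀| := by
      rw [Int.abs_eq_natAbs]
      omega
    have h2 : ((∑ T ∈ Z.image (fun x => (Submodule.Quotient.mk x : (Fin d → ℝ) ⧸ S)), (nn T).natAbs : ℕ) : ℤ)
        = |nn T₀| + ∑ T ∈ (Z.image (fun x => (Submodule.Quotient.mk x : (Fin d → ℝ) ⧸ S))).erase T₀, |nn T| := by
      push_cast
      rw [← Finset.add_sum_erase _ (fun T => |nn T|) hT₀mem]
    have h3 : |nn T₀| ≤ ∑ T ∈ (Z.image (fun x => (Submodule.Quotient.mk x : (Fin d → ℝ) ⧸ S))).erase T₀, |nn T| := by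
      calc |nn T₀| = |∑ T ∈ (Z.image (fun x => (Submodule.Quotient.mk x : (Fin d → ℝ) ⧸ S))).erase T₀, nn T| := by rw [herase, abs_neg]
        _ ≤ ∑ T ∈ (Z.image (fun x => (Submodule.Quotient.mk x : (Fin d → ℝ) ⧸ S))).erase T₀, |nn T| := Finset.abs_sum_le_sum_abs _ _
    have : (2 : ℤ) ≤ ((∑ T ∈ Z.image (fun x => (Submodule.Quotient.mk x : (Fin d → ℝ) ⧸ S)), (nn T).natAbs : ℕ) : ℤ) := by
      rw [h2]; linarith
    simp only [hnn] at this
    exact_mod_cast this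
  -- good/bad split
  set 𝒮f : Finset (Submodule ℝ (Fin d → ℝ)) := hfin.toFinset with h𝒮f
  have hS₀f : S₀ ∈ 𝒮f := hfin.mem_toFinset.mpr hS₀mem
  set GoodF : Finset (Submodule ℝ (Fin d → ℝ)) := 𝒮f.filter (fun S => XrayEq S F₁ F₂)
    with hGoodF
  set BadF : Finset (Submodule ℝ (Fin d → ℝ)) := 𝒮f.filter (fun S => ¬ XrayEq S F₁ F₂)
    with hBadF
  have hGB : GoodF.card + BadF.card = m := by
    rw [hGoodF, hBadF, Finset.card_filter_add_card_filter_not, h𝒮f,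
      ← Set.ncard_eq_toFinset_card 𝒮 hfin, hcard]
  have hS₀Bad : S₀ ∈ BadF := Finset.mem_filter.mpr ⟨hS₀f, hS₀bad⟩
  -- key bound for S₀
  have hkey : 2 * GoodF.card ≤ ∑ T ∈ Z.image (fun x => (Submodule.Quotient.mk x : (Fin d → ℝ) ⧸ S₀)),
      (((X₁.filter (fun x => (Submodule.Quotient.mk x : (Fin d → ℝ) ⧸ S₀) = T)).card : ℤ)
        - ((X₂.filter (fun x => (Submodule.Quotient.mk x : (Fin d → ℝ) ⧸ S₀) = T)).card : ℤ)).natAbs := by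
    refine key_bound X₁ X₂ hcards GoodF ?_ ?_ S₀ (hdim S₀ hS₀mem) ?_ ?_
    · intro S hS
      exact hdim S (hfin.mem_toFinset.mp (Finset.mem_filter.mp hS).1)
    · intro S hS T
      have hx := (Finset.mem_filter.mp hS).2 T
      rw [hbridge F₁ h₁ S T, hbridge F₂ h₂ S T] at hx
      exact hx
    · intro hcon
      exact hS₀bad (Finset.mem_filter.mp hcon).2
    · rw [XrayEq] at hS₀bad
      push_neg at hS₀bad
      obtain ⟨T₀, hT₀⟩ := hS₀bad
      rw [hbridge F₁ h₁ S₀ T₀, hbridge F₂ h₂ S₀ T₀] at hT₀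
      exact ⟨T₀, hT₀⟩
  -- total accounting
  have hxray : xrayDiff 𝒮 F₁ F₂ = ∑ S ∈ 𝒮f, ∑ T ∈ Z.image (fun x => (Submodule.Quotient.mk x : (Fin d → ℝ) ⧸ S)),
      (((X₁.filter (fun x => (Submodule.Quotient.mk x : (Fin d → ℝ) ⧸ S) = T)).card : ℤ)
        - ((X₂.filter (fun x => (Submodule.Quotient.mk x : (Fin d → ℝ) ⧸ S) = T)).card : ℤ)).natAbs := by
    rw [xrayDiff, ← hfin.coe_toFinset, finsum_mem_coe_finset]
    refine Finset.sum_congr rfl ?_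
    intro S _
    exact hΔ S
  have hge : ∑ S ∈ 𝒮f, ∑ T ∈ Z.image (fun x => (Submodule.Quotient.mk x : (Fin d → ℝ) ⧸ S)),
      (((X₁.filter (fun x => (Submodule.Quotient.mk x : (Fin d → ℝ) ⧸ S) = T)).card : ℤ)
        - ((X₂.filter (fun x => (Submodule.Quotient.mk x : (Fin d → ℝ) ⧸ S) = T)).card : ℤ)).natAbs
      ≥ 2 * GoodF.card + 2 * (BadF.card - 1) := by
    have hsub : BadF ⊆ 𝒮f := Finset.filter_subset _ _
    have h1 : ∑ S ∈ BadF, ∑ T ∈ Z.image (fun x => (Submodule.Quotient.mk x : (Fin d → ℝ) ⧸ S)),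
        (((X₁.filter (fun x => (Submodule.Quotient.mk x : (Fin d → ℝ) ⧸ S) = T)).card : ℤ)
          - ((X₂.filter (fun x => (Submodule.Quotient.mk x : (Fin d → ℝ) ⧸ S) = T)).card : ℤ)).natAbs
        ≤ ∑ S ∈ 𝒮f, ∑ T ∈ Z.image (fun x => (Submodule.Quotient.mk x : (Fin d → ℝ) ⧸ S)),
        (((X₁.filter (fun x => (Submodule.Quotient.mk x : (Fin d → ℝ) ⧸ S) = T)).card : ℤ)
          - ((X₂.filter (fun x => (Submodule.Quotient.mk x : (Fin d → ℝ) ⧸ S) = T)).card : ℤ)).natAbs :=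
      Finset.sum_le_sum_of_subset hsub
    have h2 := (Finset.add_sum_erase _ (fun S => ∑ T ∈ Z.image (fun x => (Submodule.Quotient.mk x : (Fin d → ℝ) ⧸ S)),
        (((X₁.filter (fun x => (Submodule.Quotient.mk x : (Fin d → ℝ) ⧸ S) = T)).card : ℤ)
          - ((X₂.filter (fun x => (Submodule.Quotient.mk x : (Fin d → ℝ) ⧸ S) = T)).card : ℤ)).natAbs) hS₀Bad).symm
    have h3 : ∀ S ∈ BadF.erase S₀, 2 ≤ ∑ T ∈ Z.image (fun x => (Submodule.Quotient.mk x : (Fin d → ℝ) ⧸ S)),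
        (((X₁.filter (fun x => (Submodule.Quotient.mk x : (Fin d → ℝ) ⧸ S) = T)).card : ℤ)
          - ((X₂.filter (fun x => (Submodule.Quotient.mk x : (Fin d → ℝ) ⧸ S) = T)).card : ℤ)).natAbs := by
      intro S hS
      exact htwo S (Finset.mem_filter.mp (Finset.mem_of_mem_erase hS)).2
    have h4 : 2 * (BadF.card - 1) ≤ ∑ S ∈ BadF.erase S₀, ∑ T ∈ Z.image (fun x => (Submodule.Quotient.mk x : (Fin d → ℝ) ⧸ S)),
        (((X₁.filter (fun x => (Submodule.Quotient.mk x : (Fin d → ℝ) ⧸ S) = T)).card : ℤ)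
          - ((X₂.filter (fun x => (Submodule.Quotient.mk x : (Fin d → ℝ) ⧸ S) = T)).card : ℤ)).natAbs := by
      calc 2 * (BadF.card - 1) = (BadF.erase S₀).card * 2 := by
            rw [Finset.card_erase_of_mem hS₀Bad]; ring
        _ ≤ _ := Finset.card_nsmul_le_sum _ _ _ h3
    omega
  have hBad1 : 1 ≤ BadF.card := Finset.card_pos.mpr ⟨S₀, hS₀Bad⟩
  rw [hxray] at h
  omega
end
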